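/- arXiv:1511.06136 — 3 statements merged into one kernel-verified Lean document; each statement's English description precedes it below -/
import Mathlib

section
/- Let A : (0,1) → (0,∞) be C¹, let V_h : Ω̄ → ℝ² be a C¹ vector field on the closure of Ω = { (x_h, z) : z ∈ (0,1), x_h ∈ ω_h(z) } ⊂ ℝ³ satisfying div_h V_h(x_h, z) = ∂_z A(z)/A(z) for all (x_h, z) ∈ Ω, and for ε > 0 set V_{h,ε}(x_h, z) = ε V_h(x_h/ε, z). Suppose r = r(t, z) and v = v(t, z) are C¹ functions satisfying ∂_t (r A) + ∂_z (r v A) = 0 for all z ∈ (0,1). Then the three-dimensional vector field U_ε(x_h, z) = [V_{h,ε}(x_h, z) v, v] (horizontal components V_{h,ε} v, vertical component v) satisfies the continuity equation ∂_t r + div_x (r U_ε) = 0 in Ω_ε = { (ε x_h, z) : z ∈ (0,1), x_h ∈ ω_h(z) }. -/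
open MeasureTheory Metric Set Filter Matrix Bornology
open scoped Topology NNReal ENNReal

noncomputable section

/-- Coerce a plain function `Fin k -> R` into `EuclideanSpace R (Fin k)`. -/
def toE {k : ℕ} (f : Fin k → ℝ) : EuclideanSpace ℝ (Fin k) := WithLp.toLp 2 f

/-- Real inner product on Euclidean space. -/
def rinner {n : ℕ} (x y : EuclideanSpace ℝ (Fin n)) : ℝ := inner ℝ x y

/-- The gradient matrix `(grad v)_{ij} = d_j v_i` of a vector field on Euclidean space,
defined through the Frechet derivative. -/
def gradM {n : ℕ} (v : EuclideanSpace ℝ (Fin n) → EuclideanSpace ℝ (Fin n))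
    (x : EuclideanSpace ℝ (Fin n)) : Matrix (Fin n) (Fin n) ℝ :=
  fun i j => fderiv ℝ v x (EuclideanSpace.single j 1) i

/-- Squared Frobenius norm of a matrix. -/
def frob2 {n : ℕ} (M : Matrix (Fin n) (Fin n) ℝ) : ℝ := ∑ i, ∑ j, (M i j) ^ 2

/-- Frobenius inner product `M : N`. -/
def frobInner {n : ℕ} (M N : Matrix (Fin n) (Fin n) ℝ) : ℝ := ∑ i, ∑ j, M i j * N i j

/-- Symmetric part of a matrix. -/
def symPart {n : ℕ} (M : Matrix (Fin n) (Fin n) ℝ) : Matrix (Fin n) (Fin n) ℝ :=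
  (1/2 : ℝ) • (M + Mᵀ)

/-- The thin channel `Ω_ε = {(ε x_h, z) : z ∈ (0,1), x_h ∈ ω(z)}`, where the last
coordinate is the vertical variable `z`. -/
def channel {m : ℕ} (ω : ℝ → Set (EuclideanSpace ℝ (Fin (m+1)))) (ε : ℝ) :
    Set (EuclideanSpace ℝ (Fin (m+2))) :=
  {x | x (Fin.last (m+1)) ∈ Set.Ioo (0:ℝ) 1 ∧
    (toE fun i : Fin (m+1) => x (Fin.castSucc i) / ε) ∈ ω (x (Fin.last (m+1)))}

/-- `ν` is an outward unit normal to `Ω` at the boundary point `x`: `ν` has unit norm and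
satisfies the tangent-cone condition at `x`. -/
def isOutwardNormalAt {n : ℕ} (Ω : Set (EuclideanSpace ℝ (Fin n)))
    (x ν : EuclideanSpace ℝ (Fin n)) : Prop :=
  ‖ν‖ = 1 ∧ ∀ δ : ℝ, 0 < δ → ∃ ρ : ℝ, 0 < ρ ∧
    ∀ y ∈ Ω ∩ Metric.ball x ρ, rinner ν (y - x) ≤ δ * ‖y - x‖

/-- The boundary condition `v · n = 0` on `∂Ω` (at every boundary point admitting an
outward unit normal). -/
def normalBC {n : ℕ} (Ω : Set (EuclideanSpace ℝ (Fin n)))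
    (v : EuclideanSpace ℝ (Fin n) → EuclideanSpace ℝ (Fin n)) : Prop :=
  ∀ x ∈ frontier Ω, ∀ ν, isOutwardNormalAt Ω x ν → rinner (v x) ν = 0

/-- The boundary condition `v = 0` on the top and bottom parts `z ∈ {0,1}` of the channel. -/
def endsZero {m : ℕ} (Ω : Set (EuclideanSpace ℝ (Fin (m+2))))
    (v : EuclideanSpace ℝ (Fin (m+2)) → EuclideanSpace ℝ (Fin (m+2))) : Prop :=
  ∀ x ∈ closure Ω, (x (Fin.last (m+1)) = 0 ∨ x (Fin.last (m+1)) = 1) → v x = 0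

/-- Condition (ii): the Lipschitz-graph boundary condition with parameters `γ, M`:
near every boundary point, in some rotated orthonormal coordinate system, `Ω` coincides
with the epigraph of an `M`-Lipschitz function. -/
def lipGraph (k : ℕ) (γ M : ℝ) (Ω : Set (EuclideanSpace ℝ (Fin (k+1)))) : Prop :=
  ∀ x ∈ frontier Ω,
    ∃ g : EuclideanSpace ℝ (Fin (k+1)) ≃ₗᵢ[ℝ] EuclideanSpace ℝ (Fin (k+1)),
    ∃ φ : EuclideanSpace ℝ (Fin k) → ℝ,
      LipschitzWith (Real.toNNReal M) φ ∧
      ∀ y : EuclideanSpace ℝ (Fin (k+1)),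
        (∀ i : Fin k, |g y (Fin.castSucc i) - g x (Fin.castSucc i)| < γ) →
        |g y (Fin.last k) - g x (Fin.last k)| < M * γ * Real.sqrt k →
        (y ∈ Ω ↔ φ (toE fun i => g y (Fin.castSucc i)) < g y (Fin.last k))

/-- The cross sections `{ω(z)}_{z∈[0,1]}` form a uniformly Lipschitz family of simply
connected bounded domains, and the boundary of `Ω₁` is Lipschitz. -/
def goodFamily (m : ℕ) (ω : ℝ → Set (EuclideanSpace ℝ (Fin (m+1)))) : Prop :=
  (∀ z ∈ Set.Icc (0:ℝ) 1, IsOpen (ω z) ∧ IsBounded (ω z) ∧ (ω z).Nonempty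
      ∧ SimplyConnectedSpace (ω z)) ∧
  (∃ γ M : ℝ, 0 < γ ∧ 0 < M ∧ ∀ z ∈ Set.Icc (0:ℝ) 1, lipGraph m γ M (ω z)) ∧
  ∃ γ M : ℝ, 0 < γ ∧ 0 < M ∧ lipGraph (m+1) γ M (channel ω 1)

/-- The point `(x_h/ε, z)` obtained from `x = (x_h, z)` by undoing the horizontal scaling. -/
def unscale (ε : ℝ) (x : EuclideanSpace ℝ (Fin 3)) : EuclideanSpace ℝ (Fin 3) :=
  toE fun j => if j = Fin.last 2 then x j else x j / ε

/-- The tilted extension `U_ε = [V_{h,ε} v, v]`, where `V_{h,ε}(x_h,z) = ε V_h(x_h/ε, z)`. -/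
def Ueps (ε : ℝ) (Vh : EuclideanSpace ℝ (Fin 3) → EuclideanSpace ℝ (Fin 2))
    (v : ℝ → ℝ → ℝ) (t : ℝ) (x : EuclideanSpace ℝ (Fin 3)) : EuclideanSpace ℝ (Fin 3) :=
  toE fun j => if h : j = Fin.last 2 then v t (x (Fin.last 2))
    else ε * Vh (unscale ε x) (j.castPred h) * v t (x (Fin.last 2))


/-- `unscale ε` as a continuous linear map. -/
def unscaleCLM (ε : ℝ) : EuclideanSpace ℝ (Fin 3) →L[ℝ] EuclideanSpace ℝ (Fin 3) :=
  LinearMap.toContinuousLinearMap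
  { toFun := unscale ε
    map_add' := by
      intro a b
      ext k
      simp only [unscale, toE, PiLp.add_apply, PiLp.toLp_apply]
      split_ifs <;> ring
    map_smul' := by
      intro c a
      ext k
      simp only [unscale, toE, PiLp.toLp_apply, PiLp.smul_apply, smul_eq_mul, RingHom.id_apply]
      split_ifs <;> ring }

lemma unscaleCLM_apply (ε : ℝ) (y : EuclideanSpace ℝ (Fin 3)) :
    unscaleCLM ε y = unscale ε y := rfl

lemma unscaleCLM_single (ε : ℝ) (i : Fin 2) :
    unscaleCLM ε (EuclideanSpace.single (Fin.castSucc i) 1) =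
      ε⁻¹ • EuclideanSpace.single (Fin.castSucc i) 1 := by
  ext k
  have hne : (Fin.castSucc i : Fin 3) ≠ Fin.last 2 := (Fin.castSucc_lt_last i).ne
  simp only [unscaleCLM_apply, unscale, toE, PiLp.toLp_apply, PiLp.smul_apply, smul_eq_mul,
    EuclideanSpace.single_apply]
  split_ifs with h1 h2 h3
  · exact absurd (h2.symm.trans h1) hne
  · ring
  · ring
  · ring

/-- the tilted extension of a solution of the 1D continuity equation with
cross-sectional area `A` solves the 3D continuity equation on the thin channel. -/
theorem tilted_extension_continuity_equation
    (ω : ℝ → Set (EuclideanSpace ℝ (Fin 2))) (A : ℝ → ℝ) (hA : ContDiff ℝ 1 A)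
    (hApos : ∀ z ∈ Set.Ioo (0:ℝ) 1, 0 < A z)
    (Vh : EuclideanSpace ℝ (Fin 3) → EuclideanSpace ℝ (Fin 2)) (hVh : ContDiff ℝ 1 Vh)
    (hdiv : ∀ x ∈ channel ω 1,
      (∑ i : Fin 2, fderiv ℝ (fun y => Vh y i) x (EuclideanSpace.single (Fin.castSucc i) 1))
        = deriv A (x (Fin.last 2)) / A (x (Fin.last 2)))
    (r v : ℝ → ℝ → ℝ)
    (hr : ContDiff ℝ 1 (Function.uncurry r)) (hv : ContDiff ℝ 1 (Function.uncurry v))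
    (hpde : ∀ t : ℝ, ∀ z ∈ Set.Ioo (0:ℝ) 1,
      deriv (fun s => r s z * A z) t + deriv (fun y => r t y * v t y * A y) z = 0)
    (ε : ℝ) (hε : 0 < ε) :
    ∀ t : ℝ, ∀ x ∈ channel ω ε,
      deriv (fun s => r s (x (Fin.last 2))) t +
        (∑ j : Fin 3, fderiv ℝ (fun y => r t (y (Fin.last 2)) * Ueps ε Vh v t y j) x
          (EuclideanSpace.single j 1)) = 0 := by
  intro t x hx
  have hεne : ε ≠ 0 := ne_of_gt hε
  obtain ⟨hz01, hωx⟩ := hx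
  set z : ℝ := x (Fin.last 2) with hzdef
  -- the unscaled point lies in the unit channel
  have huxL : unscale ε x (Fin.last 2) = z := by simp only [unscale, toE, PiLp.toLp_apply, ↓reduceIte]; rfl
  have hux : unscale ε x ∈ channel ω 1 := by
    refine ⟨by rw [huxL]; exact hz01, ?_⟩
    rw [huxL]
    have heq : (toE fun i : Fin 2 => unscale ε x (Fin.castSucc i) / 1)
        = (toE fun i : Fin 2 => x (Fin.castSucc i) / ε) := by
      ext i
      simp [unscale, toE, (show (Fin.castSucc i : Fin 3) ≠ 2 from (Fin.castSucc_lt_last i).ne), div_one]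
    rw [heq]; exact hωx
  -- differentiability facts
  have hrd := hr.differentiable one_ne_zero
  have hvd := hv.differentiable one_ne_zero
  have hrt : Differentiable ℝ (fun y => r t y) :=
    hrd.comp ((differentiable_const t).prodMk differentiable_id)
  have hvt : Differentiable ℝ (fun y => v t y) :=
    hvd.comp ((differentiable_const t).prodMk differentiable_id)
  have hrz : Differentiable ℝ (fun s => r s z) :=
    hrd.comp (differentiable_id.prodMk (differentiable_const z))
  have hg : Differentiable ℝ (fun y => r t y * v t y) := hrt.mul hvt
  have hAd : Differentiable ℝ A := hA.differentiable one_ne_zero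
  -- the PDE at (t, z)
  have hpde' := hpde t z hz01
  rw [deriv_mul_const (hrz t) (A z), deriv_fun_mul (hg z) (hAd z)] at hpde'
  -- divergence condition at the unscaled point
  have hdivx := hdiv _ hux
  rw [huxL] at hdivx
  set D : Fin 2 → ℝ := fun i => fderiv ℝ (fun y => Vh y i) (unscale ε x)
    (EuclideanSpace.single (Fin.castSucc i) 1) with hDdef
  rw [Fin.sum_univ_two] at hdivx
  -- derivative of y ↦ (r t * v t) (y (last 2))
  have hgL : HasFDerivAt (fun y : EuclideanSpace ℝ (Fin 3) => r t (y (Fin.last 2)) * v t (y (Fin.last 2)))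
      ((deriv (fun s => r t s * v t s) z) • (EuclideanSpace.proj (Fin.last 2) :
        EuclideanSpace ℝ (Fin 3) →L[ℝ] ℝ)) x := by
    have hproj : HasFDerivAt (fun y : EuclideanSpace ℝ (Fin 3) => y (Fin.last 2))
        (EuclideanSpace.proj (Fin.last 2) : EuclideanSpace ℝ (Fin 3) →L[ℝ] ℝ) x :=
      (EuclideanSpace.proj (Fin.last 2) : EuclideanSpace ℝ (Fin 3) →L[ℝ] ℝ).hasFDerivAt
    exact (hg z).hasDerivAt.comp_hasFDerivAt x hproj
  -- vertical summand
  have hlast : fderiv ℝ (fun y => r t (y (Fin.last 2)) * Ueps ε Vh v t y (Fin.last 2)) x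
      (EuclideanSpace.single (Fin.last 2) 1) = deriv (fun s => r t s * v t s) z := by
    have heq : (fun y : EuclideanSpace ℝ (Fin 3) => r t (y (Fin.last 2)) * Ueps ε Vh v t y (Fin.last 2))
        = fun y => r t (y (Fin.last 2)) * v t (y (Fin.last 2)) := by
      funext y
      simp [Ueps, toE]
    rw [heq, hgL.fderiv]
    simp [EuclideanSpace.single_apply]
  -- horizontal summands
  have hhoriz : ∀ i : Fin 2,
      fderiv ℝ (fun y => r t (y (Fin.last 2)) * Ueps ε Vh v t y (Fin.castSucc i)) x
        (EuclideanSpace.single (Fin.castSucc i) 1) = (r t z * v t z) * D i := by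
    intro i
    have hne : (Fin.castSucc i : Fin 3) ≠ Fin.last 2 := (Fin.castSucc_lt_last i).ne
    have hVi : Differentiable ℝ (fun w => Vh w i) := by
      exact (EuclideanSpace.proj i).differentiable.comp (hVh.differentiable one_ne_zero)
    have hcomp : HasFDerivAt (fun y => Vh (unscaleCLM ε y) i)
        ((fderiv ℝ (fun w => Vh w i) (unscale ε x)).comp (unscaleCLM ε)) x :=
      HasFDerivAt.comp x ((hVi _).hasFDerivAt) (unscaleCLM ε).hasFDerivAt
    have hprod := (hgL.fun_mul hcomp).const_mul ε
    have heq : (fun y : EuclideanSpace ℝ (Fin 3) => r t (y (Fin.last 2)) * Ueps ε Vh v t y (Fin.castSucc i))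
        = fun y => ε * ((r t (y (Fin.last 2)) * v t (y (Fin.last 2))) * Vh (unscaleCLM ε y) i) := by
      funext y
      simp only [Ueps, toE, dif_neg hne, Fin.castPred_castSucc, unscaleCLM_apply]
      ring
    rw [heq, hprod.fderiv]
    have hproj0 : (EuclideanSpace.proj (Fin.last 2) : EuclideanSpace ℝ (Fin 3) →L[ℝ] ℝ)
        (EuclideanSpace.single (Fin.castSucc i) 1) = 0 := by
      rw [PiLp.proj_apply, EuclideanSpace.single_apply, if_neg (fun h => hne h.symm)]
    simp only [ContinuousLinearMap.coe_smul', Pi.smul_apply, ContinuousLinearMap.add_apply,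
      ContinuousLinearMap.coe_comp', Function.comp_apply, ContinuousLinearMap.smul_apply,
      smul_eq_mul, unscaleCLM_single, hproj0, mul_zero, add_zero,
      ContinuousLinearMap.map_smul]
    rw [← hzdef]
    simp only [hDdef, smul_eq_mul]
    field_simp
  -- assemble
  rw [Fin.sum_univ_three]
  have e0 : (0 : Fin 3) = Fin.castSucc 0 := rfl
  have e1 : (1 : Fin 3) = Fin.castSucc 1 := rfl
  have e2 : (2 : Fin 3) = Fin.last 2 := rfl
  rw [e0, e1, e2, hlast, hhoriz 0, hhoriz 1]
  have hAz : A z ≠ 0 := (hApos z hz01).ne'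
  have key : deriv (fun s => r s z) t
      + (r t z * v t z * D 0 + r t z * v t z * D 1 + deriv (fun s => r t s * v t s) z)
      = (deriv (fun s => r s z) t * A z +
          (deriv (fun y => r t y * v t y) z * A z + r t z * v t z * deriv A z)) / A z := by
    have hsum : D 0 + D 1 = deriv A z / A z := by
      simp only [hDdef]; exact hdivx
    have hc : r t z * v t z * D 0 + r t z * v t z * D 1
        = r t z * v t z * (deriv A z / A z) := by rw [← mul_add, hsum]
    rw [hc]
    field_simp
    ring
  rw [key, hpde', zero_div]
end
end

section
/- Let the pressure p satisfy the assumptions (press) and let H be the pressure potential. Let K, K̃ ⊂ (0,∞) be compact sets with K ⊂ int(K̃). Then there exists a constant C(K, K̃) > 0 such that for all r ∈ K, all ρ ∈ [0,∞) \ K̃, and all u, U ∈ ℝ³: (1/2) ρ |u − U|² + H(ρ) − H'(r)(ρ − r) − H(r) ≥ C(K, K̃) ( 1 + ρ |u − U|² + ρ^γ ). -/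
open MeasureTheory Metric Set Filter Matrix Bornology
open scoped Topology NNReal ENNReal

noncomputable section

/-- The structural assumptions (press) on the pressure: `p ∈ C[0,∞) ∩ C³(0,∞)`,
`p(0) = 0`, `p' > 0` on `(0,∞)`, and `p'(ρ)/ρ^{γ-1} → p_∞ > 0` as `ρ → ∞`. -/
def press (p : ℝ → ℝ) (γ : ℝ) : Prop :=
  ContinuousOn p (Set.Ici 0) ∧ ContDiffOn ℝ 3 p (Set.Ioi 0) ∧ p 0 = 0 ∧
  (∀ ρ : ℝ, 0 < ρ → 0 < deriv p ρ) ∧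
  ∃ pinf : ℝ, 0 < pinf ∧
    Filter.Tendsto (fun ρ : ℝ => deriv p ρ / ρ ^ (γ - 1)) Filter.atTop (nhds pinf)

/-- The pressure potential `H(ρ) = ρ ∫₁^ρ p(z)/z² dz` (equal to `0` at `ρ = 0`). -/
def Hpot (p : ℝ → ℝ) (ρ : ℝ) : ℝ := ρ * ∫ z in (1:ℝ)..ρ, p z / z ^ 2

/-- The relative energy density
`E(ρ,u | r,U) = ½ ρ |u−U|² + H(ρ) − H'(r)(ρ−r) − H(r)`. -/
def relEnergy (p : ℝ → ℝ) (ρ r : ℝ) (u U : EuclideanSpace ℝ (Fin 3)) : ℝ :=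
  2⁻¹ * ρ * ‖u - U‖ ^ 2 + Hpot p ρ - deriv (Hpot p) r * (ρ - r) - Hpot p r

namespace RECaux

open intervalIntegral

def Ff (p : ℝ → ℝ) (ρ : ℝ) : ℝ := ∫ z in (1:ℝ)..ρ, p z / z ^ 2
def Gg (p : ℝ → ℝ) (r : ℝ) : ℝ := Ff p r + p r / r
def Ep (p : ℝ → ℝ) (ρ r : ℝ) : ℝ := Hpot p ρ - Gg p r * (ρ - r) - Hpot p r

variable {p : ℝ → ℝ} {γ : ℝ}

lemma pdiff (hp : press p γ) {x : ℝ} (hx : 0 < x) : HasDerivAt p (deriv p x) x := by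
  have h := (hp.2.1.differentiableOn (by norm_num)).differentiableAt
    (isOpen_Ioi.mem_nhds hx)
  exact h.hasDerivAt

lemma pderiv_cont (hp : press p γ) : ContinuousOn (deriv p) (Set.Ioi 0) :=
  hp.2.1.continuousOn_deriv_of_isOpen isOpen_Ioi (by norm_num)

lemma pmono (hp : press p γ) : StrictMonoOn p (Set.Ici 0) := by
  refine strictMonoOn_of_deriv_pos (convex_Ici 0) hp.1 ?_
  rw [interior_Ici]
  exact fun x hx => hp.2.2.2.1 x hx

lemma ppos (hp : press p γ) {x : ℝ} (hx : 0 < x) : 0 < p x := by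
  have := pmono hp (le_refl (0:ℝ)) hx.le hx
  rwa [hp.2.2.1] at this

lemma pnonneg (hp : press p γ) {x : ℝ} (hx : 0 ≤ x) : 0 ≤ p x := by
  rcases hx.eq_or_lt with h | h
  · simp [← h, hp.2.2.1]
  · exact (ppos hp h).le

lemma fcont (hp : press p γ) : ContinuousOn (fun z => p z / z ^ 2) (Set.Ioi 0) := by
  apply ContinuousOn.div (hp.1.mono Ioi_subset_Ici_self)
  · exact (continuous_pow 2).continuousOn
  · intro z hz; exact pow_ne_zero 2 (ne_of_gt hz)

lemma fint (hp : press p γ) {a b : ℝ} (ha : 0 < a) (hb : 0 < b) :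
    IntervalIntegrable (fun z => p z / z ^ 2) volume a b := by
  apply ((fcont hp).mono ?_).intervalIntegrable
  intro x hx
  exact lt_of_lt_of_le (lt_min ha hb) hx.1

lemma F_hasDeriv (hp : press p γ) {x : ℝ} (hx : 0 < x) :
    HasDerivAt (Ff p) (p x / x ^ 2) x := by
  apply integral_hasDerivAt_right (fint hp one_pos hx)
    (((fcont hp).stronglyMeasurableAtFilter isOpen_Ioi) x hx)
  exact ((fcont hp) x hx).continuousAt (isOpen_Ioi.mem_nhds hx)

lemma H_hasDeriv (hp : press p γ) {x : ℝ} (hx : 0 < x) :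
    HasDerivAt (Hpot p) (Gg p x) x := by
  have h := (hasDerivAt_id x).mul (F_hasDeriv hp hx)
  have he : (1:ℝ) * Ff p x + x * (p x / x ^ 2) = Gg p x := by
    rw [Gg, one_mul]
    congr 1
    field_simp
  rw [← he]
  exact h

lemma H_deriv_eq (hp : press p γ) {x : ℝ} (hx : 0 < x) :
    deriv (Hpot p) x = Gg p x := (H_hasDeriv hp hx).deriv

lemma G_hasDeriv (hp : press p γ) {x : ℝ} (hx : 0 < x) :
    HasDerivAt (Gg p) (deriv p x / x) x := by
  have h1 := F_hasDeriv hp hx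
  have h2 := (pdiff hp hx).div (hasDerivAt_id x) hx.ne'
  have h := h1.add h2
  have he : p x / x ^ 2 + (deriv p x * x - p x * 1) / x ^ 2 = deriv p x / x := by
    field_simp
    ring
  rw [← he]
  exact h

lemma Gcont (hp : press p γ) : ContinuousOn (Gg p) (Set.Ioi 0) :=
  fun x hx => ((G_hasDeriv hp hx).continuousAt).continuousWithinAt

lemma Hcont (hp : press p γ) : ContinuousOn (Hpot p) (Set.Ioi 0) :=
  fun x hx => ((H_hasDeriv hp hx).continuousAt).continuousWithinAt

lemma Gmono (hp : press p γ) : StrictMonoOn (Gg p) (Set.Ioi 0) := by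
  refine strictMonoOn_of_deriv_pos (convex_Ioi 0) (Gcont hp) ?_
  rw [interior_Ioi]
  intro x hx
  rw [(G_hasDeriv hp hx).deriv]
  exact div_pos (hp.2.2.2.1 x hx) hx


lemma Ep_hasDeriv (hp : press p γ) {r : ℝ} {x : ℝ} (hx : 0 < x) :
    HasDerivAt (fun ρ => Ep p ρ r) (Gg p x - Gg p r) x := by
  have h1 := H_hasDeriv hp hx
  have h2 : HasDerivAt (fun ρ : ℝ => Gg p r * (ρ - r)) (Gg p r) x := by
    simpa using (((hasDerivAt_id x).sub_const r).const_mul (Gg p r))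
  simpa [Ep] using (h1.sub h2).sub_const (Hpot p r)

lemma Ep_contOn (hp : press p γ) {r : ℝ} {s : Set ℝ} (hs : s ⊆ Set.Ioi 0) :
    ContinuousOn (fun ρ => Ep p ρ r) s :=
  fun x hx => ((Ep_hasDeriv hp (hs hx)).continuousAt).continuousWithinAt

lemma Ep_pos (hp : press p γ) {r ρ : ℝ} (hr : 0 < r) (hρ : 0 < ρ) (hne : ρ ≠ r) :
    0 < Ep p ρ r := by
  rcases hne.lt_or_gt with h | h
  · -- ρ < r
    obtain ⟨c, hc, hceq⟩ := exists_hasDerivAt_eq_slope (Hpot p) (Gg p) h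
      ((Hcont hp).mono (fun x hx => lt_of_lt_of_le hρ hx.1))
      (fun x hx => H_hasDeriv hp (hρ.trans hx.1))
    have hGlt : Gg p c < Gg p r := Gmono hp (Set.mem_Ioi.2 (hρ.trans hc.1))
      (Set.mem_Ioi.2 hr) hc.2
    have : Hpot p r - Hpot p ρ = Gg p c * (r - ρ) := by
      rw [eq_div_iff (sub_ne_zero.2 (ne_of_gt h))] at hceq
      linarith [hceq]
    have hEp : Ep p ρ r = (Gg p r - Gg p c) * (r - ρ) := by
      rw [Ep]; nlinarith [this]
    rw [hEp]
    exact mul_pos (by linarith) (by linarith)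
  · -- r < ρ
    obtain ⟨c, hc, hceq⟩ := exists_hasDerivAt_eq_slope (Hpot p) (Gg p) h
      ((Hcont hp).mono (fun x hx => lt_of_lt_of_le hr hx.1))
      (fun x hx => H_hasDeriv hp (hr.trans hx.1))
    have hGlt : Gg p r < Gg p c := Gmono hp (Set.mem_Ioi.2 hr)
      (Set.mem_Ioi.2 (hr.trans hc.1)) hc.1
    have : Hpot p ρ - Hpot p r = Gg p c * (ρ - r) := by
      rw [eq_div_iff (sub_ne_zero.2 (ne_of_gt h))] at hceq
      linarith [hceq]
    have hEp : Ep p ρ r = (Gg p c - Gg p r) * (ρ - r) := by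
      rw [Ep]; nlinarith [this]
    rw [hEp]
    exact mul_pos (by linarith) (by linarith)

lemma Ep_right (hp : press p γ) {r a ρ : ℝ} (hr : 0 < r) (hra : r < a) (haρ : a ≤ ρ) :
    Ep p a r ≤ Ep p ρ r := by
  have hmono : MonotoneOn (fun ρ => Ep p ρ r) (Set.Icc a ρ) := by
    refine monotoneOn_of_deriv_nonneg (convex_Icc a ρ) (Ep_contOn hp ?_) ?_ ?_
    · intro x hx; exact lt_of_lt_of_le (hr.trans hra) hx.1
    · intro x hx
      rw [interior_Icc] at hx
      exact ((Ep_hasDeriv hp (by linarith [hx.1, hr.trans hra] : (0:ℝ) < x)).differentiableAt).differentiableWithinAt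
    · intro x hx
      rw [interior_Icc] at hx
      have hx0 : 0 < x := by linarith [hx.1, hr.trans hra]
      rw [(Ep_hasDeriv hp hx0).deriv]
      have := (Gmono hp (Set.mem_Ioi.2 hr) (Set.mem_Ioi.2 hx0) (by linarith [hx.1])).le
      linarith
  exact hmono (Set.left_mem_Icc.2 haρ) ⟨haρ, le_refl ρ⟩ haρ

lemma Ep_left (hp : press p γ) {r b ρ : ℝ} (hb : 0 < b) (hbr : b < r) (hρ : 0 < ρ)
    (hρb : ρ ≤ b) : Ep p b r ≤ Ep p ρ r := by
  have hmono : AntitoneOn (fun ρ => Ep p ρ r) (Set.Icc ρ b) := by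
    refine antitoneOn_of_deriv_nonpos (convex_Icc ρ b) (Ep_contOn hp ?_) ?_ ?_
    · intro x hx; exact lt_of_lt_of_le hρ hx.1
    · intro x hx
      rw [interior_Icc] at hx
      exact ((Ep_hasDeriv hp (hρ.trans hx.1)).differentiableAt).differentiableWithinAt
    · intro x hx
      rw [interior_Icc] at hx
      have hx0 : 0 < x := hρ.trans hx.1
      rw [(Ep_hasDeriv hp hx0).deriv]
      have := (Gmono hp (Set.mem_Ioi.2 hx0) (Set.mem_Ioi.2 (hb.trans hbr))
        (by linarith [hx.2])).le
      linarith
  exact hmono ⟨le_refl ρ, hρb⟩ (Set.right_mem_Icc.2 hρb) hρb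

lemma Ep_zero (hp : press p γ) {r : ℝ} (hr : 0 < r) : Ep p 0 r = p r := by
  have : Hpot p 0 = 0 := by simp [Hpot]
  rw [Ep, this, Hpot, Gg, Ff]
  field_simp
  ring

lemma growth (hp : press p γ) (hγ : 3/2 < γ) :
    ∃ c c' R : ℝ, 0 < c ∧ 1 ≤ R ∧ ∀ ρ, R ≤ ρ → c * ρ ^ γ - c' * ρ ≤ Hpot p ρ := by
  obtain ⟨pinf, hpinf, htend⟩ := hp.2.2.2.2
  have hγ1 : (1:ℝ) < γ := by linarith
  have hev : ∀ᶠ s in atTop, pinf / 2 ≤ deriv p s / s ^ (γ - 1) :=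
    htend.eventually (eventually_ge_nhds (half_lt_self hpinf))
  obtain ⟨R₀, hR₀⟩ := eventually_atTop.1 hev
  set R₁ : ℝ := max R₀ 1 with hR₁def
  have hR₁1 : (1:ℝ) ≤ R₁ := le_max_right _ _
  have hR₁0 : (0:ℝ) < R₁ := lt_of_lt_of_le one_pos hR₁1
  -- step 1 : derivative lower bound
  have hstep1 : ∀ s, R₁ ≤ s → pinf / 2 * s ^ (γ - 1) ≤ deriv p s := by
    intro s hs
    have hs0 : 0 < s := lt_of_lt_of_le hR₁0 hs
    have h := hR₀ s (le_trans (le_max_left _ _) hs)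
    rwa [le_div_iff₀ (Real.rpow_pos_of_pos hs0 _)] at h
  set c1 : ℝ := pinf / (2 * γ) with hc1def
  have hc1 : 0 < c1 := by positivity
  -- step 2 : pressure lower bound
  have hstep2 : ∀ s, R₁ ≤ s → c1 * (s ^ γ - R₁ ^ γ) ≤ p s := by
    intro s hs
    have huIcc : Set.uIcc R₁ s ⊆ Set.Ioi 0 := by
      rw [Set.uIcc_of_le hs]
      intro t ht; exact lt_of_lt_of_le hR₁0 ht.1
    have hftc : ∫ t in R₁..s, deriv p t = p s - p R₁ := by
      apply integral_eq_sub_of_hasDerivAt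
      · intro t ht; exact pdiff hp (huIcc ht)
      · exact ((pderiv_cont hp).mono huIcc).intervalIntegrable
    have hint1 : IntervalIntegrable (fun t : ℝ => pinf / 2 * t ^ (γ - 1)) volume R₁ s := by
      apply IntervalIntegrable.const_mul
      apply intervalIntegrable_rpow
      right
      intro h0; exact absurd (huIcc h0) (by simp)
    have hmono := integral_mono_on hs hint1
      (((pderiv_cont hp).mono huIcc).intervalIntegrable)
      (fun t ht => hstep1 t ht.1)
    rw [hftc] at hmono
    have hcomp : ∫ t in R₁..s, pinf / 2 * t ^ (γ - 1)
        = pinf / 2 * ((s ^ γ - R₁ ^ γ) / γ) := by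
      rw [intervalIntegral.integral_const_mul, integral_rpow (Or.inl (by linarith : (-1:ℝ) < γ - 1)), show γ - 1 + 1 = γ by ring]
    rw [hcomp] at hmono
    have hpR₁ : 0 ≤ p R₁ := pnonneg hp hR₁0.le
    have : c1 * (s ^ γ - R₁ ^ γ) = pinf / 2 * ((s ^ γ - R₁ ^ γ) / γ) := by
      rw [hc1def]; field_simp
    linarith [this]
  set c2 : ℝ := c1 * R₁ ^ γ with hc2def
  have hc2 : 0 ≤ c2 := by positivity
  set c4 : ℝ := c1 / (γ - 1) with hc4def
  have hc4 : 0 < c4 := by apply div_pos hc1; linarith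
  set c3 : ℝ := c4 * R₁ ^ (γ - 1) + c2 / R₁ with hc3def
  refine ⟨c4, c3, R₁, hc4, hR₁1, ?_⟩
  intro ρ hρ
  have hρ0 : 0 < ρ := lt_of_lt_of_le hR₁0 hρ
  have huIcc : Set.uIcc R₁ ρ ⊆ Set.Ioi 0 := by
    rw [Set.uIcc_of_le hρ]
    intro t ht; exact lt_of_lt_of_le hR₁0 ht.1
  have h0uIcc : (0:ℝ) ∉ Set.uIcc R₁ ρ := fun h0 => absurd (huIcc h0) (by simp)
  -- split integral
  have hsplit : Ff p ρ = Ff p R₁ + ∫ z in R₁..ρ, p z / z ^ 2 := by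
    rw [Ff, Ff, intervalIntegral.integral_add_adjacent_intervals
      (fint hp one_pos hR₁0) (fint hp hR₁0 hρ0)]
  have hFR₁ : 0 ≤ Ff p R₁ := by
    apply intervalIntegral.integral_nonneg hR₁1
    intro t ht
    have ht0 : 0 < t := lt_of_lt_of_le one_pos ht.1
    exact div_nonneg (pnonneg hp ht0.le) (by positivity)
  -- integrand bound on [R₁, ρ]
  have hbound : ∀ z ∈ Set.Icc R₁ ρ,
      c1 * z ^ (γ - 2) - c2 * z ^ (-2:ℝ) ≤ p z / z ^ 2 := by
    intro z hz
    have hz0 : 0 < z := lt_of_lt_of_le hR₁0 hz.1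
    have hz2 : z ^ (2:ℝ) = z ^ 2 := by
      rw [show (2:ℝ) = ((2:ℕ):ℝ) by norm_num, Real.rpow_natCast]
    have h1 : c1 * z ^ (γ - 2) = c1 * z ^ γ / z ^ 2 := by
      rw [Real.rpow_sub hz0, hz2]; ring
    have h2 : c2 * z ^ (-2:ℝ) = c2 / z ^ 2 := by
      rw [show (-2:ℝ) = -(2:ℝ) by norm_num, Real.rpow_neg hz0.le, hz2]; ring
    rw [h1, h2, div_sub_div_same, div_le_div_iff_of_pos_right (by positivity : (0:ℝ) < z ^ 2)]
    have := hstep2 z hz.1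
    rw [hc2def]; linarith
  have hint2 : IntervalIntegrable (fun z : ℝ => c1 * z ^ (γ - 2) - c2 * z ^ (-2:ℝ))
      volume R₁ ρ := by
    apply IntervalIntegrable.sub
    · exact (intervalIntegrable_rpow (Or.inr h0uIcc)).const_mul _
    · exact (intervalIntegrable_rpow (Or.inr h0uIcc)).const_mul _
  have hmono2 := integral_mono_on hρ hint2 (fint hp hR₁0 hρ0) hbound
  have hcomp2 : ∫ z in R₁..ρ, (c1 * z ^ (γ - 2) - c2 * z ^ (-2:ℝ))
      = c1 * ((ρ ^ (γ-1) - R₁ ^ (γ-1)) / (γ-1)) - c2 * ((ρ ^ (-1:ℝ) - R₁ ^ (-1:ℝ)) / (-1)) := by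
    rw [intervalIntegral.integral_sub
        ((intervalIntegrable_rpow (Or.inr h0uIcc)).const_mul _)
        ((intervalIntegrable_rpow (Or.inr h0uIcc)).const_mul _),
      intervalIntegral.integral_const_mul, intervalIntegral.integral_const_mul,
      integral_rpow (Or.inl (by linarith : (-1:ℝ) < γ - 2)),
      integral_rpow (Or.inr ⟨by norm_num, h0uIcc⟩),
      show γ - 2 + 1 = γ - 1 by ring, show (-2:ℝ) + 1 = -1 by norm_num]
  rw [hcomp2] at hmono2
  -- assemble
  have hFf : c4 * ρ ^ (γ-1) - c3 ≤ Ff p ρ := by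
    rw [hsplit, hc3def, hc4def]
    have hρinv : 0 ≤ ρ ^ (-1:ℝ) := (Real.rpow_pos_of_pos hρ0 _).le
    have hR₁inv : R₁ ^ (-1:ℝ) = 1 / R₁ := by
      rw [Real.rpow_neg_one]; exact (one_div R₁).symm
    rw [hR₁inv] at hmono2
    have h2 : c1 * ((ρ ^ (γ-1) - R₁ ^ (γ-1)) / (γ-1)) - c2 * ((ρ ^ (-1:ℝ) - 1/R₁) / (-1))
        ≥ c1/(γ-1) * ρ ^ (γ-1) - (c1/(γ-1) * R₁ ^ (γ-1) + c2 / R₁) := by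
      have e1 : c1 * ((ρ ^ (γ-1) - R₁ ^ (γ-1)) / (γ-1))
          = c1/(γ-1) * ρ ^ (γ-1) - c1/(γ-1) * R₁ ^ (γ-1) := by
        field_simp
      have e2 : c2 * ((ρ ^ (-1:ℝ) - 1/R₁) / (-1)) = c2/R₁ - c2 * ρ ^ (-1:ℝ) := by
        rw [show ((ρ ^ (-1:ℝ) - 1/R₁) / (-1)) = -((ρ ^ (-1:ℝ) - 1/R₁)) by ring]
        ring
      rw [e1, e2]
      nlinarith [mul_nonneg hc2 hρinv]
    linarith
  -- multiply by ρ
  have hρrpow : ρ * ρ ^ (γ - 1) = ρ ^ γ := by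
    rw [show γ = (γ - 1) + 1 by ring, Real.rpow_add_one hρ0.ne']
    ring_nf
  have := mul_le_mul_of_nonneg_left hFf hρ0.le
  rw [Hpot]
  have hHpot : Hpot p ρ = ρ * Ff p ρ := rfl
  calc c4 * ρ ^ γ - c3 * ρ = ρ * (c4 * ρ ^ (γ-1) - c3) := by
        rw [← hρrpow]; ring
    _ ≤ ρ * Ff p ρ := this
    _ = Hpot p ρ := rfl

def relEnergy' (p : ℝ → ℝ) (ρ r : ℝ) (X : ℝ) : ℝ :=
  2⁻¹ * ρ * X + Hpot p ρ - deriv (Hpot p) r * (ρ - r) - Hpot p r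

set_option maxHeartbeats 2000000 in
theorem main (p : ℝ → ℝ) (γ : ℝ) (hp : press p γ) (hγ : 3/2 < γ)
    (K Kt : Set ℝ) (hK : IsCompact K) (hKt : IsCompact Kt)
    (hK0 : K ⊆ Set.Ioi 0) (hKt0 : Kt ⊆ Set.Ioi 0) (hKsub : K ⊆ interior Kt) :
    ∃ C : ℝ, 0 < C ∧
      ∀ r ∈ K, ∀ ρ ∈ Set.Ici (0:ℝ) \ Kt, ∀ X : ℝ, 0 ≤ X →
        C * (1 + ρ * X + ρ ^ γ) ≤ relEnergy' p ρ r X := by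
  rcases Set.eq_empty_or_nonempty K with hKe | hKne
  · exact ⟨1, one_pos, fun r hr => absurd hr (by simp [hKe])⟩
  have hγ0 : (0:ℝ) < γ := by linarith
  obtain ⟨δ₀, hδ₀, hthick⟩ := hK.exists_thickening_subset_open isOpen_interior hKsub
  obtain ⟨rmin, hrminK, hrminlb⟩ := hK.exists_isLeast hKne
  obtain ⟨rmax, hrmaxK, hrmaxub⟩ := hK.exists_isGreatest hKne
  have hrmin0 : 0 < rmin := hK0 hrminK
  have hrmax0 : 0 < rmax := hK0 hrmaxK
  set δ : ℝ := min δ₀ (rmin/2) with hδdef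
  have hδ : 0 < δ := lt_min hδ₀ (by linarith)
  have hδrmin : δ < rmin := lt_of_le_of_lt (min_le_right _ _) (by linarith)
  have hsep : ∀ r ∈ K, ∀ ρ : ℝ, ρ ∉ Kt → δ ≤ |ρ - r| := by
    intro r hr ρ hρ
    by_contra h
    push_neg at h
    have : ρ ∈ Metric.thickening δ₀ K := by
      rw [Metric.mem_thickening_iff]
      exact ⟨r, hr, by rw [Real.dist_eq]; exact lt_of_lt_of_le h (min_le_left _ _)⟩
    exact hρ (interior_subset (hthick this))
  obtain ⟨c4, c5, R₁, hc4, hR₁, hgrow⟩ := growth hp hγ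
  -- bounds on K
  obtain ⟨A₀, hA₀⟩ := hK.exists_bound_of_continuousOn ((Gcont hp).mono hK0)
  obtain ⟨B₀, hB₀⟩ := hK.exists_bound_of_continuousOn ((Hcont hp).mono hK0)
  set A : ℝ := max A₀ 0 with hAdef
  set B : ℝ := max B₀ 0 with hBdef
  have hA : ∀ r ∈ K, |Gg p r| ≤ A := fun r hr =>
    le_trans (by rw [← Real.norm_eq_abs]; exact hA₀ r hr) (le_max_left _ _)
  have hB : ∀ r ∈ K, |Hpot p r| ≤ B := fun r hr =>
    le_trans (by rw [← Real.norm_eq_abs]; exact hB₀ r hr) (le_max_left _ _)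
  have hApos : 0 ≤ A := le_max_right _ _
  have hBpos : 0 ≤ B := le_max_right _ _
  -- thresholds
  set c6 : ℝ := max (c5 + A) 0 with hc6def
  set E₀ : ℝ := max (A * rmax + B) 0 with hE₀def
  set M : ℝ := max 1 (max (2 * c6 / c4) (4 * (E₀ + c4/4) / c4)) with hMdef
  have hM1 : (1:ℝ) ≤ M := le_max_left _ _
  have hM0 : (0:ℝ) < M := lt_of_lt_of_le one_pos hM1
  set R₂ : ℝ := max (max R₁ rmax) (M ^ (γ - 1)⁻¹) with hR₂def
  have hR₂1 : (1:ℝ) ≤ R₂ := le_trans hR₁ (le_trans (le_max_left _ _) (le_max_left _ _))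
  have hR₂0 : (0:ℝ) < R₂ := lt_of_lt_of_le one_pos hR₂1
  have hrmaxR₂ : rmax ≤ R₂ := le_trans (le_max_right _ _) (le_max_left _ _)
  have hγ1' : γ - 1 ≠ 0 := by intro h; linarith [hγ]
  -- big rho bound
  have hbig : ∀ r ∈ K, ∀ ρ : ℝ, R₂ ≤ ρ → c4/4 * (1 + ρ ^ γ) ≤ Ep p ρ r := by
    intro r hr ρ hρ
    have hρ1 : (1:ℝ) ≤ ρ := le_trans hR₂1 hρ
    have hρ0 : (0:ℝ) < ρ := lt_of_lt_of_le one_pos hρ1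
    have hr0 : 0 < r := hK0 hr
    have hrmax' : r ≤ rmax := hrmaxub hr
    -- rpow facts
    have hpow1 : M ≤ ρ ^ (γ - 1) := by
      calc M = (M ^ (γ-1)⁻¹) ^ (γ - 1) := by
            rw [← Real.rpow_mul hM0.le, inv_mul_cancel₀ hγ1', Real.rpow_one]
        _ ≤ ρ ^ (γ - 1) := by
            apply Real.rpow_le_rpow (Real.rpow_nonneg hM0.le _)
              (le_trans (le_max_right _ _) hρ) (by linarith)
    have hpow2 : ρ ^ (γ - 1) ≤ ρ ^ γ := Real.rpow_le_rpow_of_exponent_le hρ1 (by linarith)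
    have hpowmul : ρ * ρ ^ (γ - 1) = ρ ^ γ := by
      rw [show γ = (γ - 1) + 1 by ring, Real.rpow_add_one hρ0.ne']
      ring_nf
    have hgrowρ := hgrow ρ (le_trans (le_trans (le_max_left _ _) (le_max_left _ _)) hρ)
    -- bound on the linear term
    have habs : |ρ - r| ≤ ρ + rmax := by
      rw [abs_le]; constructor <;> nlinarith
    have hlin : Gg p r * (ρ - r) ≤ A * (ρ + rmax) := by
      calc Gg p r * (ρ - r) ≤ |Gg p r * (ρ - r)| := le_abs_self _
        _ = |Gg p r| * |ρ - r| := abs_mul _ _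
        _ ≤ A * (ρ + rmax) := by
            apply mul_le_mul (hA r hr) habs (abs_nonneg _) hApos
    have hHr : -B ≤ -Hpot p r := by
      have := hB r hr; rw [abs_le] at this; linarith [this.1]
    have hEpb : c4 * ρ ^ γ - c5 * ρ - A * (ρ + rmax) - B ≤ Ep p ρ r := by
      rw [Ep]
      have := hB r hr; rw [abs_le] at this
      linarith [hgrowρ, hlin, this.1]
    -- the threshold inequalities
    have hc6M : c6 ≤ c4/2 * M := by
      have h : 2 * c6 / c4 ≤ M := le_trans (le_max_left _ _) (le_max_right _ _)
      rw [div_le_iff₀ hc4] at h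
      linarith
    have hE₀M : E₀ + c4/4 ≤ c4/4 * M := by
      have h : 4 * (E₀ + c4/4) / c4 ≤ M := le_trans (le_max_right _ _) (le_max_right _ _)
      rw [div_le_iff₀ hc4] at h
      linarith
    -- combine
    have h1 : (c5 + A) * ρ ≤ c4/2 * ρ ^ γ := by
      have k1 : (c5 + A) * ρ ≤ c6 * ρ :=
        mul_le_mul_of_nonneg_right (le_max_left _ _) hρ0.le
      have k2 : c6 * ρ ≤ (c4/2 * M) * ρ := mul_le_mul_of_nonneg_right hc6M hρ0.le
      have k3 : c4/2 * (M * ρ) ≤ c4/2 * (ρ ^ (γ-1) * ρ) :=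
        mul_le_mul_of_nonneg_left (mul_le_mul_of_nonneg_right hpow1 hρ0.le) (by linarith)
      have k4 : ρ ^ (γ-1) * ρ = ρ ^ γ := by rw [mul_comm]; exact hpowmul
      rw [k4] at k3
      linarith
    have h2 : A * rmax + B + c4/4 ≤ c4/4 * ρ ^ γ := by
      have hE' : A * rmax + B ≤ E₀ := le_max_left _ _
      have k : c4/4 * M ≤ c4/4 * ρ ^ γ :=
        mul_le_mul_of_nonneg_left (le_trans hpow1 hpow2) (by linarith)
      linarith
    linarith [hEpb]
  clear_value δ A B c6 E₀ M R₂
  -- mid-region minima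
  have hgnegcont : ContinuousOn (fun r => Ep p (r - δ) r) K := by
    have h1 : ContinuousOn (fun r : ℝ => Hpot p (r - δ)) K := by
      apply (Hcont hp).comp ((continuous_id.sub continuous_const).continuousOn)
      intro r hr
      have h3 := hrminlb hr
      show r - δ ∈ Set.Ioi (0:ℝ)
      exact Set.mem_Ioi.mpr (by linarith)
    have h2 : ContinuousOn (fun r : ℝ => Gg p r * ((r - δ) - r)) K :=
      ((Gcont hp).mono hK0).mul
        (((continuous_id.sub continuous_const).sub continuous_id).continuousOn)
    exact (h1.sub h2).sub ((Hcont hp).mono hK0)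
  have hgposcont : ContinuousOn (fun r => Ep p (r + δ) r) K := by
    have h1 : ContinuousOn (fun r : ℝ => Hpot p (r + δ)) K := by
      apply (Hcont hp).comp ((continuous_id.add continuous_const).continuousOn)
      intro r hr
      have h0 : 0 < r := hK0 hr
      show r + δ ∈ Set.Ioi (0:ℝ)
      exact Set.mem_Ioi.mpr (by linarith)
    have h2 : ContinuousOn (fun r : ℝ => Gg p r * ((r + δ) - r)) K :=
      ((Gcont hp).mono hK0).mul
        (((continuous_id.add continuous_const).sub continuous_id).continuousOn)
    exact (h1.sub h2).sub ((Hcont hp).mono hK0)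
  obtain ⟨rlo, hrloK, hminlo⟩ := hK.exists_isMinOn hKne hgnegcont
  obtain ⟨rhi, hrhiK, hminhi⟩ := hK.exists_isMinOn hKne hgposcont
  obtain ⟨rp, hrpK, hminp⟩ := hK.exists_isMinOn hKne
    (hp.1.mono (subset_trans hK0 Set.Ioi_subset_Ici_self))
  have hrlo0 : 0 < rlo := hK0 hrloK
  have hrhi0 : 0 < rhi := hK0 hrhiK
  have hmlopos : 0 < Ep p (rlo - δ) rlo := by
    apply Ep_pos hp hrlo0 (by linarith [hrminlb hrloK]) (by intro h; nlinarith [hδ])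
  have hmhipos : 0 < Ep p (rhi + δ) rhi :=
    Ep_pos hp hrhi0 (by linarith) (by intro h; nlinarith [hδ])
  have hpmpos : 0 < p rp := ppos hp (hK0 hrpK)
  obtain ⟨cmin, hcmindef⟩ : ∃ x : ℝ,
      x = min (Ep p (rlo - δ) rlo) (min (Ep p (rhi + δ) rhi) (p rp)) := ⟨_, rfl⟩
  have hcmin : 0 < cmin := by
    rw [hcmindef]; exact lt_min hmlopos (lt_min hmhipos hpmpos)
  have hR₂γ : 0 < R₂ ^ γ := Real.rpow_pos_of_pos hR₂0 γ
  have hden : 0 < 1 + R₂ ^ γ := by linarith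
  obtain ⟨Cmid, hCmiddef⟩ : ∃ x : ℝ, x = cmin / (1 + R₂ ^ γ) := ⟨_, rfl⟩
  have hCmid : 0 < Cmid := by rw [hCmiddef]; exact div_pos hcmin hden
  obtain ⟨C, hCdef⟩ : ∃ x : ℝ, x = min (min 2⁻¹ (c4/4)) Cmid := ⟨_, rfl⟩
  have hC : 0 < C := by
    rw [hCdef]; exact lt_min (lt_min (by norm_num) (by linarith)) hCmid
  refine ⟨C, hC, ?_⟩
  intro r hrK ρ hρmem X hX
  have hρ0 : (0:ℝ) ≤ ρ := hρmem.1
  have hρKt : ρ ∉ Kt := hρmem.2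
  have hr0 : 0 < r := hK0 hrK
  have hrel : relEnergy' p ρ r X = 2⁻¹ * ρ * X + Ep p ρ r := by
    rw [relEnergy', Ep, H_deriv_eq hp hr0]; ring
  have hkey : C * (1 + ρ ^ γ) ≤ Ep p ρ r := by
    by_cases hcase : R₂ ≤ ρ
    · have hb := hbig r hrK ρ hcase
      have hργ0 : 0 ≤ ρ ^ γ := Real.rpow_nonneg hρ0 γ
      have hCc4 : C ≤ c4/4 := by
        rw [hCdef]; exact le_trans (min_le_left _ _) (min_le_right _ _)
      have h1 : C * (1 + ρ ^ γ) ≤ c4/4 * (1 + ρ ^ γ) :=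
        mul_le_mul_of_nonneg_right hCc4 (by linarith)
      linarith
    · rw [not_le] at hcase
      have hργR : ρ ^ γ ≤ R₂ ^ γ := Real.rpow_le_rpow hρ0 hcase.le hγ0.le
      have hργ0 : 0 ≤ ρ ^ γ := Real.rpow_nonneg hρ0 γ
      have hCm : C ≤ Cmid := by rw [hCdef]; exact min_le_right _ _
      have hstep : C * (1 + ρ ^ γ) ≤ Cmid * (1 + R₂ ^ γ) :=
        mul_le_mul hCm (by linarith) (by linarith) hCmid.le
      have heq : Cmid * (1 + R₂ ^ γ) = cmin := by
        rw [hCmiddef]; exact div_mul_cancel₀ _ (ne_of_gt hden)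
      have hclow : cmin ≤ Ep p ρ r := by
        rcases eq_or_lt_of_le hρ0 with h0 | hρpos
        · rw [← h0, Ep_zero hp hr0]
          have hpr : p rp ≤ p r := isMinOn_iff.1 hminp r hrK
          rw [hcmindef]
          calc min (Ep p (rlo - δ) rlo) (min (Ep p (rhi + δ) rhi) (p rp))
              ≤ min (Ep p (rhi + δ) rhi) (p rp) := min_le_right _ _
            _ ≤ p rp := min_le_right _ _
            _ ≤ p r := hpr
        · have hδsep := hsep r hrK ρ hρKt
          have hne : ρ ≠ r := by
            intro h
            exact hρKt (h ▸ interior_subset (hKsub hrK))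
          rcases hne.lt_or_gt with hlt | hgt
          · have hsep2 : δ ≤ r - ρ := by
              rw [abs_of_nonpos (by linarith : ρ - r ≤ 0)] at hδsep
              linarith
            have hrδ0 : 0 < r - δ := by linarith [hrminlb hrK]
            have h1 := Ep_left hp hrδ0 (by linarith : r - δ < r) hρpos
              (by linarith : ρ ≤ r - δ)
            have h2 : Ep p (rlo - δ) rlo ≤ Ep p (r - δ) r := isMinOn_iff.1 hminlo r hrK
            rw [hcmindef]
            calc min (Ep p (rlo - δ) rlo) (min (Ep p (rhi + δ) rhi) (p rp))
                ≤ Ep p (rlo - δ) rlo := min_le_left _ _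
              _ ≤ Ep p (r - δ) r := h2
              _ ≤ Ep p ρ r := h1
          · have hsep2 : δ ≤ ρ - r := by
              rw [abs_of_nonneg (by linarith : (0:ℝ) ≤ ρ - r)] at hδsep
              linarith
            have h1 := Ep_right hp hr0 (by linarith : r < r + δ)
              (by linarith : r + δ ≤ ρ)
            have h2 : Ep p (rhi + δ) rhi ≤ Ep p (r + δ) r := isMinOn_iff.1 hminhi r hrK
            rw [hcmindef]
            calc min (Ep p (rlo - δ) rlo) (min (Ep p (rhi + δ) rhi) (p rp))
                ≤ min (Ep p (rhi + δ) rhi) (p rp) := min_le_right _ _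
              _ ≤ Ep p (rhi + δ) rhi := min_le_left _ _
              _ ≤ Ep p (r + δ) r := h2
              _ ≤ Ep p ρ r := h1
      linarith
  have hC2 : C ≤ 2⁻¹ := by
    rw [hCdef]; exact le_trans (min_le_left _ _) (min_le_left _ _)
  have hkin : C * (ρ * X) ≤ 2⁻¹ * ρ * X := by
    have h := mul_nonneg hρ0 hX
    nlinarith
  rw [hrel]
  calc C * (1 + ρ * X + ρ ^ γ) = C * (1 + ρ ^ γ) + C * (ρ * X) := by ring
    _ ≤ Ep p ρ r + 2⁻¹ * ρ * X := by linarith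
    _ = 2⁻¹ * ρ * X + Ep p ρ r := by ring

end RECaux

/-- coercivity of the relative energy density in the residual regime
`ρ ∈ [0,∞) \ K̃`, `r ∈ K ⊂ int K̃`. -/
theorem relative_energy_coercivity_residual (p : ℝ → ℝ) (γ : ℝ)
    (hp : press p γ) (hγ : 3/2 < γ)
    (K Kt : Set ℝ) (hK : IsCompact K) (hKt : IsCompact Kt)
    (hK0 : K ⊆ Set.Ioi 0) (hKt0 : Kt ⊆ Set.Ioi 0) (hKsub : K ⊆ interior Kt) :
    ∃ C : ℝ, 0 < C ∧
      ∀ r ∈ K, ∀ ρ ∈ Set.Ici (0:ℝ) \ Kt, ∀ u U : EuclideanSpace ℝ (Fin 3),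
        C * (1 + ρ * ‖u - U‖ ^ 2 + ρ ^ γ) ≤ relEnergy p ρ r u U := by
  obtain ⟨C, hC, h⟩ := RECaux.main p γ hp hγ K Kt hK hKt hK0 hKt0 hKsub
  exact ⟨C, hC, fun r hr ρ hρ u U => h r hr ρ hρ (‖u - U‖ ^ 2) (by positivity)⟩
end
end

section
/- Let Ω_ε ⊂ ℝ^n be the thin channel with circular cross sections ω_h(z) = B(X(z), r(z)), where X : [0,1] → ℝ^{n−1} and r : [0,1] → (0,∞) are Lipschitz. Let Q ∈ W^{1,2}((0,1); so(n−1)) be a nonzero function with Q(0) = Q(1) = 0 and define v^ε(x_h, z) = ( Q(z)(x_h − ε X(z)), 0 ) for (x_h, z) ∈ Ω_ε. Then v^ε ∈ W^{1,2}(Ω_ε; ℝ^n), v^ε satisfies the boundary conditions (BC), and there exist constants c > 0 and C, independent of ε, such that ⨍_{Ω_ε} |∇v^ε|² dx ≥ c and ⨍_{Ω_ε} |sym ∇v^ε|² dx ≤ C ε². -/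
open MeasureTheory Metric Set Filter Matrix Bornology
open scoped Topology NNReal ENNReal

set_option maxHeartbeats 4000000

noncomputable section

/-- Membership in the class `𝓘` of `W^{1,2}` paths of skew-symmetric matrices
vanishing at the endpoints (here realized as `C¹` paths). -/
def memI (d : ℕ) (Q : ℝ → Matrix (Fin (d+1)) (Fin (d+1)) ℝ) : Prop :=
  (∀ i j, ContDiff ℝ 1 (fun z => Q z i j)) ∧ (∀ z, (Q z)ᵀ = -(Q z)) ∧ Q 0 = 0 ∧ Q 1 = 0

/-- The rotational test field `v_Q^ε(x_h, z) = (Q(z)(x_h − εX(z)), 0)`. -/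
def vQfield (d : ℕ) (X : ℝ → EuclideanSpace ℝ (Fin (d+1))) (ε : ℝ)
    (Q : ℝ → Matrix (Fin (d+1)) (Fin (d+1)) ℝ)
    (x : EuclideanSpace ℝ (Fin (d+2))) : EuclideanSpace ℝ (Fin (d+2)) :=
  toE fun j => if h : j = Fin.last (d+1) then 0
    else ∑ k : Fin (d+1), Q (x (Fin.last (d+1))) (j.castPred h) k *
      (x (Fin.castSucc k) - ε * X (x (Fin.last (d+1))) k)


-- ## Auxiliary lemmas

theorem coord_abs_le_norm {k : ℕ} (u : EuclideanSpace ℝ (Fin k)) (i : Fin k) :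
    |u i| ≤ ‖u‖ := by
  have h := EuclideanSpace.norm_eq u
  rw [h]
  have h1 : |u i| = Real.sqrt (‖u i‖ ^ 2) := by
    rw [Real.sqrt_sq_eq_abs]; simp [abs_abs]
  rw [h1]
  apply Real.sqrt_le_sqrt
  exact Finset.single_le_sum (f := fun j => ‖u j‖^2) (fun j _ => by positivity) (Finset.mem_univ i)

theorem norm_le_of_coords {k : ℕ} (u : EuclideanSpace ℝ (Fin k)) (B : ℝ)
    (hB : ∀ i, |u i| ≤ B) : ‖u‖ ≤ Real.sqrt k * B := by
  rcases Nat.eq_zero_or_pos k with hk | hk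
  · subst hk
    have : ‖u‖ = 0 := by simp [EuclideanSpace.norm_eq]
    simp [this]
  have hB0 : 0 ≤ B := le_trans (abs_nonneg _) (hB ⟨0, hk⟩)
  rw [EuclideanSpace.norm_eq]
  have : ∑ i, ‖u i‖^2 ≤ ∑ _i : Fin k, B^2 := by
    apply Finset.sum_le_sum
    intro i _
    have := hB i
    have h2 : ‖u i‖ = |u i| := rfl
    rw [h2]
    nlinarith [abs_nonneg (u i)]
  calc Real.sqrt (∑ i, ‖u i‖^2) ≤ Real.sqrt (∑ _i : Fin k, B^2) := Real.sqrt_le_sqrt this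
    _ = Real.sqrt (k * B^2) := by rw [Finset.sum_const]; simp [mul_comm]
    _ = Real.sqrt k * B := by
        rw [Real.sqrt_mul (by positivity), Real.sqrt_sq hB0]

theorem abs_deriv_le_of_lipschitz {f : ℝ → ℝ} {K : ℝ≥0} (hf : LipschitzWith K f) (z : ℝ) :
    |deriv f z| ≤ K := by
  have := norm_deriv_le_of_lipschitz (𝕜 := ℝ) (x₀ := z) hf
  simpa using this

theorem skew_sum_zero {m : ℕ} (M : Matrix (Fin m) (Fin m) ℝ) (hM : Mᵀ = -M)
    (w : Fin m → ℝ) : ∑ i, (∑ k, M i k * w k) * w i = 0 := by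
  have key : ∀ i k, M i k = - M k i := by
    intro i k
    have := congrFun (congrFun hM k) i
    simpa [Matrix.transpose_apply, Matrix.neg_apply] using this
  have h : (∑ i, ∑ k, M i k * w k * w i) = - ∑ i, ∑ k, M i k * w k * w i := by
    conv_lhs => rw [Finset.sum_comm]
    rw [← Finset.sum_neg_distrib]
    apply Finset.sum_congr rfl; intro i _
    rw [← Finset.sum_neg_distrib]
    apply Finset.sum_congr rfl; intro k _
    rw [key k i]; ring
  have h2 : (∑ i, ∑ k, M i k * w k * w i) = 0 := by linarith
  rw [← h2]
  apply Finset.sum_congr rfl; intro i _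
  rw [Finset.sum_mul]

theorem symPart_apply {n : ℕ} (M : Matrix (Fin n) (Fin n) ℝ) (i j : Fin n) :
    symPart M i j = (M i j + M j i) / 2 := by
  simp [symPart, Matrix.add_apply, Matrix.transpose_apply]
  ring

theorem frob2_eq {d : ℕ} (M : Matrix (Fin (d+2)) (Fin (d+2)) ℝ)
    (QM : Matrix (Fin (d+1)) (Fin (d+1)) ℝ) (col : Fin (d+1) → ℝ)
    (h1 : ∀ i' j', M (Fin.castSucc i') (Fin.castSucc j') = QM i' j')
    (h2 : ∀ i', M (Fin.castSucc i') (Fin.last (d+1)) = col i')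
    (h3 : ∀ j, M (Fin.last (d+1)) j = 0) :
    frob2 M = (∑ i', ∑ j', (QM i' j')^2) + ∑ i', (col i')^2 := by
  rw [frob2, Fin.sum_univ_castSucc]
  have hrow : ∀ i' : Fin (d+1), ∑ j, (M (Fin.castSucc i') j)^2
      = (∑ j', (QM i' j')^2) + (col i')^2 := by
    intro i'
    rw [Fin.sum_univ_castSucc, h2]
    congr 1
    exact Finset.sum_congr rfl fun j' _ => by rw [h1]
  have hlast : ∑ j, (M (Fin.last (d+1)) j)^2 = 0 := by
    apply Finset.sum_eq_zero; intro j _; rw [h3]; ring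
  rw [hlast, add_zero]
  rw [Finset.sum_congr rfl fun i' _ => hrow i', Finset.sum_add_distrib]

theorem frob2_sym_eq {d : ℕ} (M : Matrix (Fin (d+2)) (Fin (d+2)) ℝ)
    (QM : Matrix (Fin (d+1)) (Fin (d+1)) ℝ) (col : Fin (d+1) → ℝ)
    (hskew : QM ᵀ = -QM)
    (h1 : ∀ i' j', M (Fin.castSucc i') (Fin.castSucc j') = QM i' j')
    (h2 : ∀ i', M (Fin.castSucc i') (Fin.last (d+1)) = col i')
    (h3 : ∀ j, M (Fin.last (d+1)) j = 0) :
    frob2 (symPart M) = 2⁻¹ * ∑ i', (col i')^2 := by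
  have hsk : ∀ i' j', QM j' i' = - QM i' j' := by
    intro i' j'
    have := congrFun (congrFun hskew i') j'
    simpa [Matrix.transpose_apply, Matrix.neg_apply] using this
  rw [frob2, Fin.sum_univ_castSucc]
  have hrow : ∀ i' : Fin (d+1), ∑ j, (symPart M (Fin.castSucc i') j)^2
      = (col i' / 2)^2 := by
    intro i'
    rw [Fin.sum_univ_castSucc]
    have hz : ∀ j' : Fin (d+1), (symPart M (Fin.castSucc i') (Fin.castSucc j'))^2 = 0 := by
      intro j'
      rw [symPart_apply, h1, h1, hsk i' j']
      ring
    rw [Finset.sum_congr rfl fun j' _ => hz j', Finset.sum_const, smul_zero, zero_add]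
    rw [symPart_apply, h2, h3]
    ring
  have hlast : ∑ j, (symPart M (Fin.last (d+1)) j)^2
      = ∑ j', (col j' / 2)^2 := by
    rw [Fin.sum_univ_castSucc]
    have : (symPart M (Fin.last (d+1)) (Fin.last (d+1)))^2 = 0 := by
      rw [symPart_apply, h3]; ring
    rw [this, add_zero]
    apply Finset.sum_congr rfl
    intro j' _
    rw [symPart_apply, h2, h3]
    ring
  rw [hlast, Finset.sum_congr rfl fun i' _ => hrow i']
  rw [← Finset.sum_add_distrib, Finset.mul_sum]
  apply Finset.sum_congr rfl
  intro i' _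
  ring

/-- the last-column entries of the gradient -/
def vcol (d : ℕ) (X : ℝ → EuclideanSpace ℝ (Fin (d+1))) (ε : ℝ)
    (Q : ℝ → Matrix (Fin (d+1)) (Fin (d+1)) ℝ)
    (x : EuclideanSpace ℝ (Fin (d+2))) (i' : Fin (d+1)) : ℝ :=
  ∑ k : Fin (d+1),
    (Q (x (Fin.last (d+1))) i' k * (0 - ε * deriv (fun t => X t k) (x (Fin.last (d+1))))
      + (x (Fin.castSucc k) - ε * X (x (Fin.last (d+1))) k) *
        deriv (fun t => Q t i' k) (x (Fin.last (d+1))))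

theorem gradM_vQ (d : ℕ) (X : ℝ → EuclideanSpace ℝ (Fin (d+1))) (ε : ℝ)
    (Q : ℝ → Matrix (Fin (d+1)) (Fin (d+1)) ℝ)
    (hQ1 : ∀ i j, ContDiff ℝ 1 (fun z => Q z i j))
    (x : EuclideanSpace ℝ (Fin (d+2)))
    (hd : DifferentiableAt ℝ X (x (Fin.last (d+1)))) :
    (∀ i' j' : Fin (d+1), gradM (vQfield d X ε Q) x (Fin.castSucc i') (Fin.castSucc j')
        = Q (x (Fin.last (d+1))) i' j') ∧
    (∀ i' : Fin (d+1), gradM (vQfield d X ε Q) x (Fin.castSucc i') (Fin.last (d+1))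
        = vcol d X ε Q x i') ∧
    (∀ j, gradM (vQfield d X ε Q) x (Fin.last (d+1)) j = 0) := by
  classical
  set z := x (Fin.last (d+1)) with hz
  set ℓ : Fin (d+2) := Fin.last (d+1) with hℓ
  -- scalar derivative facts
  have hQd : ∀ i' k : Fin (d+1), HasDerivAt (fun t => Q t i' k)
      (deriv (fun t => Q t i' k) z) z := fun i' k =>
    (((hQ1 i' k).differentiable (by norm_num)) z).hasDerivAt
  have hXk : ∀ k : Fin (d+1), HasDerivAt (fun t => X t k)
      (deriv (fun t => X t k) z) z := by
    intro k
    have h1 : HasDerivAt (fun t => X t k) ((EuclideanSpace.proj k) (deriv X z)) z := by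
      have := (EuclideanSpace.proj (𝕜 := ℝ) k).hasFDerivAt.comp_hasDerivAt z hd.hasDerivAt
      exact this
    simpa [h1.deriv] using h1
  -- the CLM pieces
  set projL : EuclideanSpace ℝ (Fin (d+2)) →L[ℝ] ℝ := EuclideanSpace.proj ℓ with hprojL
  have hprojL_at : ∀ y : EuclideanSpace ℝ (Fin (d+2)), projL y = y ℓ := fun y => rfl
  -- component derivatives
  set Dh : Fin (d+1) → (EuclideanSpace ℝ (Fin (d+2)) →L[ℝ] ℝ) := fun i' =>
    ∑ k : Fin (d+1),
      (Q z i' k • ((EuclideanSpace.proj (Fin.castSucc k) : EuclideanSpace ℝ (Fin (d+2)) →L[ℝ] ℝ)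
          - ε • (deriv (fun t => X t k) z • projL))
        + (x (Fin.castSucc k) - ε * X z k) • (deriv (fun t => Q t i' k) z • projL)) with hDh
  set D : ∀ _ : Fin (d+2), EuclideanSpace ℝ (Fin (d+2)) →L[ℝ] ℝ :=
    fun i => Fin.lastCases 0 (fun i' => Dh i') i with hD
  have hcomp : ∀ i : Fin (d+2), HasFDerivAt (fun y : EuclideanSpace ℝ (Fin (d+2)) =>
      vQfield d X ε Q y i) (D i) x := by
    intro i
    induction i using Fin.lastCases with
    | last =>
      have : (fun y : EuclideanSpace ℝ (Fin (d+2)) => vQfield d X ε Q y ℓ)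
          = fun _ => (0:ℝ) := by
        funext y; simp [vQfield, toE, hℓ]
      rw [hD]; simp only [Fin.lastCases_last]
      rw [this]; exact hasFDerivAt_const 0 x
    | cast i' =>
      have heq : (fun y : EuclideanSpace ℝ (Fin (d+2)) => vQfield d X ε Q y (Fin.castSucc i'))
          = fun y => ∑ k : Fin (d+1), (fun t => Q t i' k) (y ℓ) *
              (y (Fin.castSucc k) - ε * (fun t => X t k) (y ℓ)) := by
        funext y
        simp [vQfield, toE, hℓ, Fin.castPred_castSucc, (Fin.castSucc_lt_last i').ne]
      rw [hD]; simp only [Fin.lastCases_castSucc]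
      rw [heq]
      have : HasFDerivAt (fun y : EuclideanSpace ℝ (Fin (d+2)) =>
          ∑ k : Fin (d+1), (fun t => Q t i' k) (y ℓ) *
            (y (Fin.castSucc k) - ε * (fun t => X t k) (y ℓ))) (Dh i') x := by
        rw [hDh]
        apply HasFDerivAt.fun_sum
        intro k _
        have hproj : HasFDerivAt (fun y : EuclideanSpace ℝ (Fin (d+2)) => y ℓ) projL x :=
          (EuclideanSpace.proj (𝕜 := ℝ) ℓ).hasFDerivAt
        have hQy : HasFDerivAt (fun y : EuclideanSpace ℝ (Fin (d+2)) => Q (y ℓ) i' k)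
            ((deriv (fun t => Q t i' k) z) • projL) x :=
          (hQd i' k).comp_hasFDerivAt (h₂ := fun t => Q t i' k) x hproj
        have hXy : HasFDerivAt (fun y : EuclideanSpace ℝ (Fin (d+2)) => X (y ℓ) k)
            ((deriv (fun t => X t k) z) • projL) x :=
          (hXk k).comp_hasFDerivAt (h₂ := fun t => X t k) x hproj
        have hcoord : HasFDerivAt (fun y : EuclideanSpace ℝ (Fin (d+2)) => y (Fin.castSucc k))
            (EuclideanSpace.proj (Fin.castSucc k) : EuclideanSpace ℝ (Fin (d+2)) →L[ℝ] ℝ) x :=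
          (EuclideanSpace.proj (𝕜 := ℝ) (Fin.castSucc k) :
            EuclideanSpace ℝ (Fin (d+2)) →L[ℝ] ℝ).hasFDerivAt
        have h2 : HasFDerivAt (fun y : EuclideanSpace ℝ (Fin (d+2)) =>
            y (Fin.castSucc k) - ε * X (y ℓ) k)
            ((EuclideanSpace.proj (Fin.castSucc k) : EuclideanSpace ℝ (Fin (d+2)) →L[ℝ] ℝ)
              - ε • (deriv (fun t => X t k) z • projL)) x :=
          hcoord.sub (hXy.const_mul ε)
        have := hQy.fun_mul h2
        convert this using 2 <;> ring_nf
      exact this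
  -- assemble
  set CLE := PiLp.continuousLinearEquiv 2 ℝ (fun _ : Fin (d+2) => ℝ) with hCLE
  have hu : HasFDerivAt (fun y : EuclideanSpace ℝ (Fin (d+2)) =>
      (fun i => vQfield d X ε Q y i : Fin (d+2) → ℝ)) (ContinuousLinearMap.pi D) x :=
    hasFDerivAt_pi.mpr hcomp
  have hv : HasFDerivAt (vQfield d X ε Q)
      ((CLE.symm : (Fin (d+2) → ℝ) →L[ℝ] EuclideanSpace ℝ (Fin (d+2))).comp
        (ContinuousLinearMap.pi D)) x := by
    have := ((CLE.symm : (Fin (d+2) → ℝ) →L[ℝ] EuclideanSpace ℝ (Fin (d+2))).hasFDerivAt).comp x hu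
    exact this
  have hfd : fderiv ℝ (vQfield d X ε Q) x =
      ((CLE.symm : (Fin (d+2) → ℝ) →L[ℝ] EuclideanSpace ℝ (Fin (d+2))).comp
        (ContinuousLinearMap.pi D)) := hv.fderiv
  have hentry : ∀ (i j : Fin (d+2)), gradM (vQfield d X ε Q) x i j
      = D i (EuclideanSpace.single j 1) := by
    intro i j
    rw [gradM, hfd]
    rfl
  have hDh_eval : ∀ (i' : Fin (d+1)) (w : EuclideanSpace ℝ (Fin (d+2))),
      Dh i' w = ∑ k : Fin (d+1),
        (Q z i' k * (w (Fin.castSucc k) - ε * (deriv (fun t => X t k) z * w ℓ))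
          + (x (Fin.castSucc k) - ε * X z k) * (deriv (fun t => Q t i' k) z * w ℓ)) := by
    intro i' w
    rw [hDh]
    simp only [ContinuousLinearMap.coe_sum', Finset.sum_apply,
      ContinuousLinearMap.add_apply, ContinuousLinearMap.smul_apply,
      ContinuousLinearMap.sub_apply, PiLp.proj_apply, hprojL, smul_eq_mul]
  refine ⟨?_, ?_, ?_⟩
  · intro i' j'
    rw [hentry, hD]
    simp only [Fin.lastCases_castSucc]
    rw [hDh_eval]
    simp only [EuclideanSpace.single_apply, Fin.castSucc_inj,
      if_neg (Fin.castSucc_lt_last j').ne']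
    rw [Finset.sum_eq_single j'] <;> simp +contextual [hℓ, (Fin.castSucc_lt_last j').ne']
  · intro i'
    rw [hentry, hD]
    simp only [Fin.lastCases_castSucc]
    rw [hDh_eval, vcol]
    apply Finset.sum_congr rfl
    intro k _
    simp [EuclideanSpace.single_apply, (Fin.castSucc_lt_last k).ne, hℓ, hz]
  · intro j
    rw [hentry, hD, hℓ]
    simp

theorem cyl_volume (d : ℕ) (A : Set ℝ) (B : Set (EuclideanSpace ℝ (Fin (d+1))))
    (hA : MeasurableSet A) (hB : MeasurableSet B) :
    volume {x : EuclideanSpace ℝ (Fin (d+2)) | x (Fin.last (d+1)) ∈ A ∧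
      (toE fun i : Fin (d+1) => x (Fin.castSucc i)) ∈ B} = volume A * volume B := by
  classical
  set eE := (MeasurableEquiv.toLp 2 (Fin (d+2) → ℝ)).symm with heE
  set eP := MeasurableEquiv.piFinSuccAbove (fun _ : Fin (d+2) => ℝ) (Fin.last (d+1)) with heP
  set eEm := (MeasurableEquiv.toLp 2 (Fin (d+1) → ℝ)).symm with heEm
  set B' : Set (Fin (d+1) → ℝ) := eEm.symm ⁻¹' B with hB'
  have hBmeas' : MeasurableSet B' := eEm.symm.measurable hB
  have hseteq : {x : EuclideanSpace ℝ (Fin (d+2)) | x (Fin.last (d+1)) ∈ A ∧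
      (toE fun i : Fin (d+1) => x (Fin.castSucc i)) ∈ B}
      = eE ⁻¹' (eP ⁻¹' (A ×ˢ B')) := by
    ext x
    simp only [mem_setOf_eq, mem_preimage, mem_prod]
    constructor
    · rintro ⟨h1, h2⟩
      refine ⟨?_, ?_⟩
      · simpa [heP, MeasurableEquiv.piFinSuccAbove, heE, MeasurableEquiv.coe_toLp_symm] using h1
      · simp only [hB', mem_preimage]
        convert h2 using 2
        ext i
        simp [heP, MeasurableEquiv.piFinSuccAbove, heE, heEm, Fin.removeNth, Fin.succAbove_last, toE, Fin.init,
          MeasurableEquiv.coe_toLp, MeasurableEquiv.coe_toLp_symm,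
          ]
    · rintro ⟨h1, h2⟩
      constructor
      · simpa [heP, MeasurableEquiv.piFinSuccAbove, heE, MeasurableEquiv.coe_toLp_symm] using h1
      · simp only [hB', mem_preimage] at h2
        convert h2 using 2
        ext i
        simp [heP, MeasurableEquiv.piFinSuccAbove, heE, heEm, Fin.removeNth, Fin.succAbove_last, toE, Fin.init,
          MeasurableEquiv.coe_toLp, MeasurableEquiv.coe_toLp_symm,
          ]
  rw [hseteq]
  have h1 := (EuclideanSpace.volume_preserving_symm_measurableEquiv_toLp (ι := Fin (d+2))).measure_preimage
    (s := eP ⁻¹' (A ×ˢ B')) ((eP.measurable (hA.prod hBmeas')).nullMeasurableSet)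
  rw [h1]
  have h2 := (volume_preserving_piFinSuccAbove (fun _ : Fin (d+2) => ℝ) (Fin.last (d+1))).measure_preimage
    (s := A ×ˢ B') ((hA.prod hBmeas').nullMeasurableSet)
  rw [h2, Measure.volume_eq_prod, Measure.prod_prod]
  congr 1
  exact ((EuclideanSpace.volume_preserving_symm_measurableEquiv_toLp (ι := Fin (d+1))).symm eEm).measure_preimage
    hB.nullMeasurableSet

/-- The continuous map `x ↦ (x_h)/ε` used throughout. -/
def hmap (d : ℕ) (ε : ℝ) (x : EuclideanSpace ℝ (Fin (d+2))) : EuclideanSpace ℝ (Fin (d+1)) :=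
  toE fun i : Fin (d+1) => x (Fin.castSucc i) / ε

theorem hmap_continuous (d : ℕ) (ε : ℝ) : Continuous (hmap d ε) := by
  have : Continuous (fun x : EuclideanSpace ℝ (Fin (d+2)) => (fun i : Fin (d+1) =>
      x (Fin.castSucc i) / ε : Fin (d+1) → ℝ)) := by
    apply continuous_pi
    intro i
    exact ((EuclideanSpace.proj (𝕜 := ℝ) (Fin.castSucc i) :
      EuclideanSpace ℝ (Fin (d+2)) →L[ℝ] ℝ).continuous).div_const ε
  exact (PiLp.continuousLinearEquiv 2 ℝ (fun _ : Fin (d+1) => ℝ)).symm.continuous.comp this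

theorem proj_last_continuous (d : ℕ) :
    Continuous (fun x : EuclideanSpace ℝ (Fin (d+2)) => x (Fin.last (d+1))) :=
  (EuclideanSpace.proj (𝕜 := ℝ) (Fin.last (d+1)) :
    EuclideanSpace ℝ (Fin (d+2)) →L[ℝ] ℝ).continuous

theorem chan_open (d : ℕ) (X : ℝ → EuclideanSpace ℝ (Fin (d+1))) (r : ℝ → ℝ)
    (hXc : Continuous X) (hrc : Continuous r) (ε : ℝ) :
    IsOpen (channel (fun z => Metric.ball (X z) (r z)) ε) := by
  have heq : channel (fun z => Metric.ball (X z) (r z)) ε =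
      (fun x : EuclideanSpace ℝ (Fin (d+2)) => (x (Fin.last (d+1)), hmap d ε x)) ⁻¹'
        {p : ℝ × EuclideanSpace ℝ (Fin (d+1)) |
          (0 < p.1 ∧ p.1 < 1) ∧ dist p.2 (X p.1) < r p.1} := by
    ext x
    simp [channel, hmap, Set.mem_Ioo, Metric.mem_ball, and_assoc]
  rw [heq]
  apply IsOpen.preimage ((proj_last_continuous d).prodMk (hmap_continuous d ε))
  apply IsOpen.inter
  · exact ((isOpen_lt continuous_const continuous_fst).inter
      (isOpen_lt continuous_fst continuous_const))
  · exact isOpen_lt (continuous_snd.dist (hXc.comp continuous_fst)) (hrc.comp continuous_fst)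

theorem chan_closure (d : ℕ) (X : ℝ → EuclideanSpace ℝ (Fin (d+1))) (r : ℝ → ℝ)
    (hXc : Continuous X) (hrc : Continuous r) (ε : ℝ) :
    closure (channel (fun z => Metric.ball (X z) (r z)) ε) ⊆
      {x : EuclideanSpace ℝ (Fin (d+2)) | x (Fin.last (d+1)) ∈ Set.Icc (0:ℝ) 1 ∧
        dist (hmap d ε x) (X (x (Fin.last (d+1)))) ≤ r (x (Fin.last (d+1)))} := by
  apply closure_minimal
  · intro x hx
    obtain ⟨h1, h2⟩ := hx
    exact ⟨⟨le_of_lt h1.1, le_of_lt h1.2⟩, le_of_lt h2⟩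
  · have heq : {x : EuclideanSpace ℝ (Fin (d+2)) | x (Fin.last (d+1)) ∈ Set.Icc (0:ℝ) 1 ∧
        dist (hmap d ε x) (X (x (Fin.last (d+1)))) ≤ r (x (Fin.last (d+1)))} =
        (fun x : EuclideanSpace ℝ (Fin (d+2)) => (x (Fin.last (d+1)), hmap d ε x)) ⁻¹'
          {p : ℝ × EuclideanSpace ℝ (Fin (d+1)) |
            (0 ≤ p.1 ∧ p.1 ≤ 1) ∧ dist p.2 (X p.1) ≤ r p.1} := by
      ext x
      simp [Set.mem_Icc, and_assoc]
    rw [heq]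
    apply IsClosed.preimage ((proj_last_continuous d).prodMk (hmap_continuous d ε))
    apply IsClosed.inter
    · exact ((isClosed_le continuous_const continuous_fst).inter
        (isClosed_le continuous_fst continuous_const))
    · exact isClosed_le (continuous_snd.dist (hXc.comp continuous_fst)) (hrc.comp continuous_fst)

theorem vQ_ends (d : ℕ) (X : ℝ → EuclideanSpace ℝ (Fin (d+1))) (ε : ℝ)
    (Q : ℝ → Matrix (Fin (d+1)) (Fin (d+1)) ℝ) (hQ0 : Q 0 = 0) (hQ1 : Q 1 = 0)
    (x : EuclideanSpace ℝ (Fin (d+2)))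
    (hx : x (Fin.last (d+1)) = 0 ∨ x (Fin.last (d+1)) = 1) :
    vQfield d X ε Q x = 0 := by
  have hQz : Q (x (Fin.last (d+1))) = 0 := by
    rcases hx with h | h <;> rw [h] <;> assumption
  ext j
  show (if h : j = Fin.last (d+1) then (0:ℝ)
    else ∑ k : Fin (d+1), Q (x (Fin.last (d+1))) (j.castPred h) k *
      (x (Fin.castSucc k) - ε * X (x (Fin.last (d+1))) k)) = 0
  split
  · rfl
  · rw [hQz]
    simp

theorem vQ_normalBC (d : ℕ) (X : ℝ → EuclideanSpace ℝ (Fin (d+1))) (r : ℝ → ℝ)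
    (hXc : Continuous X) (hrc : Continuous r)
    (hrpos : ∀ z ∈ Set.Icc (0:ℝ) 1, 0 < r z) (ε : ℝ) (hε : 0 < ε)
    (Q : ℝ → Matrix (Fin (d+1)) (Fin (d+1)) ℝ)
    (hskew : ∀ z, (Q z)ᵀ = -(Q z)) (hQ0 : Q 0 = 0) (hQ1 : Q 1 = 0) :
    normalBC (channel (fun z => Metric.ball (X z) (r z)) ε) (vQfield d X ε Q) := by
  intro x hx ν hν
  set Ω := channel (fun z => Metric.ball (X z) (r z)) ε with hΩ
  rw [(chan_open d X r hXc hrc ε).frontier_eq] at hx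
  obtain ⟨hxc, hxn⟩ := hx
  obtain ⟨hzIcc, hdist⟩ := chan_closure d X r hXc hrc ε hxc
  set z := x (Fin.last (d+1)) with hzdef
  by_cases hz01 : z = 0 ∨ z = 1
  · rw [vQ_ends d X ε Q hQ0 hQ1 x hz01]
    show (inner ℝ (0 : EuclideanSpace ℝ (Fin (d+2))) ν : ℝ) = 0
    exact inner_zero_left ν
  -- lateral case
  push_neg at hz01
  have hzIoo : z ∈ Set.Ioo (0:ℝ) 1 :=
    ⟨lt_of_le_of_ne hzIcc.1 (Ne.symm hz01.1), lt_of_le_of_ne hzIcc.2 hz01.2⟩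
  have hrz : 0 < r z := hrpos z hzIcc
  have hdist_eq : dist (hmap d ε x) (X z) = r z := by
    by_contra hne
    have hlt : dist (hmap d ε x) (X z) < r z := lt_of_le_of_ne hdist hne
    exact hxn ⟨hzIoo, hlt⟩
  set wv : EuclideanSpace ℝ (Fin (d+1)) :=
    toE (fun k => x (Fin.castSucc k) - ε * X z k) with hwv
  have hmap_sub : ∀ y : EuclideanSpace ℝ (Fin (d+2)),
      hmap d ε y - X (y (Fin.last (d+1)))
        = ε⁻¹ • (toE (fun k => y (Fin.castSucc k) - ε * X (y (Fin.last (d+1))) k)) := by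
    intro y
    ext i
    show y (Fin.castSucc i) / ε - X (y (Fin.last (d+1))) i
      = ε⁻¹ * (y (Fin.castSucc i) - ε * X (y (Fin.last (d+1))) i)
    field_simp
  have hnw : ‖wv‖ = ε * r z := by
    have h1 : dist (hmap d ε x) (X z) = ‖hmap d ε x - X z‖ := dist_eq_norm _ _
    rw [hdist_eq] at h1
    rw [hmap_sub x] at h1
    rw [norm_smul] at h1
    simp only [Real.norm_eq_abs, abs_inv, abs_of_pos hε] at h1
    rw [← hwv] at h1
    field_simp at h1
    linarith [h1]
  have hw0 : 0 < ‖wv‖ := by rw [hnw]; positivity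
  set uv : EuclideanSpace ℝ (Fin (d+1)) :=
    toE (fun i => ∑ k, Q z i k * wv k) with huv
  have hinner_wu : (inner ℝ wv uv : ℝ) = 0 := by
    have h := skew_sum_zero (Q z) (hskew z) (fun k => wv k)
    rw [PiLp.inner_apply]
    simp only [RCLike.inner_apply, conj_trivial]
    rw [← h]
    apply Finset.sum_congr rfl
    intro i _
    show uv i * wv i = _
    rw [huv]
    show (∑ k, Q z i k * wv k) * wv i = _
    ring
  have hvx : vQfield d X ε Q x = toE (Fin.snoc uv 0) := by
    ext j
    induction j using Fin.lastCases with
    | last =>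
      simp [vQfield, toE]
    | cast j' =>
      simp only [vQfield, toE, Fin.snoc_castSucc, dif_neg (Fin.castSucc_lt_last j').ne,
        Fin.castPred_castSucc]
      rfl
  -- main perturbation estimate
  have main : ∀ u : EuclideanSpace ℝ (Fin (d+1)), (inner ℝ wv u : ℝ) = 0 →
      rinner ν (toE (Fin.snoc u 0)) ≤ 0 := by
    intro u hu
    set Kc : ℝ := (‖u‖^2 + ‖wv‖^2)/‖wv‖^2 with hKc
    have hw2 : (0:ℝ) < ‖wv‖^2 := by positivity
    have hKc1 : 1 ≤ Kc := by
      rw [hKc, le_div_iff₀ hw2]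
      nlinarith [sq_nonneg ‖u‖]
    have hKc0 : 0 < Kc := lt_of_lt_of_le one_pos hKc1
    have hKcw : Kc * ‖wv‖^2 = ‖u‖^2 + ‖wv‖^2 := by
      rw [hKc]; field_simp
    set U : EuclideanSpace ℝ (Fin (d+2)) := toE (Fin.snoc u 0) with hU
    set W : EuclideanSpace ℝ (Fin (d+2)) := toE (Fin.snoc wv 0) with hW
    have hUl : U (Fin.last (d+1)) = 0 := by simp [hU, toE]
    have hWl : W (Fin.last (d+1)) = 0 := by simp [hW, toE]
    have hUc : ∀ k : Fin (d+1), U (Fin.castSucc k) = u k := by intro k; simp [hU, toE]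
    have hWc : ∀ k : Fin (d+1), W (Fin.castSucc k) = wv k := by intro k; simp [hW, toE]
    have hmem : ∀ t : ℝ, 0 < t → t * Kc < 1 → x + t • U - (Kc*t^2) • W ∈ Ω := by
      intro t ht htK
      set y := x + t • U - (Kc*t^2) • W with hy
      have hyapp : ∀ j : Fin (d+2), y j = x j + t * U j - (Kc*t^2) * W j := by
        intro j; rfl
      have hyl : y (Fin.last (d+1)) = z := by
        rw [hyapp, hUl, hWl]; ring
      have hcoords : ∀ k : Fin (d+1), y (Fin.castSucc k) - ε * X z k
          = (1 - Kc*t^2) * wv k + t * u k := by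
        intro k
        rw [hyapp, hUc, hWc]
        have : wv k = x (Fin.castSucc k) - ε * X z k := rfl
        rw [this]; ring
      constructor
      · rw [hyl]; exact hzIoo
      · show (toE fun i => y (Fin.castSucc i) / ε) ∈ Metric.ball (X (y (Fin.last (d+1)))) (r (y (Fin.last (d+1))))
        rw [Metric.mem_ball, hyl]
        have hsub : (toE fun i => y (Fin.castSucc i) / ε) - X z
            = ε⁻¹ • ((1 - Kc*t^2) • wv + t • u) := by
          ext i
          show y (Fin.castSucc i) / ε - X z i = ε⁻¹ * ((1 - Kc*t^2) * wv i + t * u i)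
          rw [← hcoords i]
          field_simp
        have hnormsq : ‖(1 - Kc*t^2) • wv + t • u‖^2
            = (1 - Kc*t^2)^2 * ‖wv‖^2 + t^2 * ‖u‖^2 := by
          rw [norm_add_sq_real]
          rw [real_inner_smul_left, real_inner_smul_right, hu]
          rw [norm_smul, norm_smul]
          simp only [Real.norm_eq_abs, mul_pow, sq_abs]
          try ring
        have e1 : (1 - Kc*t^2)^2 * ‖wv‖^2 + t^2*‖u‖^2 - ‖wv‖^2
            = t^2 * ((Kc*t)^2*‖wv‖^2 - ‖u‖^2 - 2*‖wv‖^2) := by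
          linear_combination (-2*t^2) * hKcw
        have hKt1 : Kc * t < 1 := by linarith [htK, mul_comm t Kc]
        have hKt0 : 0 < Kc * t := mul_pos hKc0 ht
        have e2 : (Kc*t)^2 < 1 := by nlinarith
        have hlt2 : ‖(1 - Kc*t^2) • wv + t • u‖^2 < ‖wv‖^2 := by
          rw [hnormsq]
          have e3 : (1 - Kc*t^2)^2 * ‖wv‖^2 + t^2*‖u‖^2 - ‖wv‖^2 < 0 := by
            rw [e1]
            have h4 : (Kc*t)^2*‖wv‖^2 - ‖u‖^2 - 2*‖wv‖^2 < 0 := by nlinarith [sq_nonneg ‖u‖]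
            have h5 : 0 < t^2 := by positivity
            nlinarith
          linarith
        have hlt : ‖(1 - Kc*t^2) • wv + t • u‖ < ‖wv‖ := by
          have h1 : ‖(1 - Kc*t^2) • wv + t • u‖ ≥ 0 := norm_nonneg _
          nlinarith
        rw [dist_eq_norm, hsub, norm_smul]
        simp only [Real.norm_eq_abs, abs_inv, abs_of_pos hε]
        rw [inv_mul_lt_iff₀ hε]  -- goal: ‖..‖ < ε * r z
        rw [← hnw]
        exact hlt
      -- end hmem
    have claim : ∀ δ : ℝ, 0 < δ → rinner ν U ≤ δ * ((‖U‖ + Kc*‖W‖ + 1) + Kc * ‖W‖) := by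
      intro δ hδ
      obtain ⟨ρ, hρ, hρle⟩ := hν.2 δ hδ
      set Cb : ℝ := ‖U‖ + Kc*‖W‖ + 1 with hCb
      have hCb0 : 0 < Cb := by
        rw [hCb]
        have : 0 ≤ Kc * ‖W‖ := by positivity
        have := norm_nonneg U
        linarith
      set t : ℝ := min (1/(2*Kc)) (min (ρ/(2*Cb)) δ) with htdef
      have ht0 : 0 < t := by
        apply lt_min
        · positivity
        · exact lt_min (by positivity) hδ
      have htK : t * Kc < 1 := by
        have h1 : t ≤ 1/(2*Kc) := min_le_left _ _
        have : t * Kc ≤ (1/(2*Kc)) * Kc := by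
          apply mul_le_mul_of_nonneg_right h1 (le_of_lt hKc0)
        have heq : (1/(2*Kc)) * Kc = 1/2 := by field_simp
        rw [heq] at this
        linarith
      have htCb : t * Cb ≤ ρ/2 := by
        have h1 : t ≤ ρ/(2*Cb) := le_trans (min_le_right _ _) (min_le_left _ _)
        calc t * Cb ≤ (ρ/(2*Cb)) * Cb := mul_le_mul_of_nonneg_right h1 (le_of_lt hCb0)
          _ = ρ/2 := by field_simp
      have htδ : t ≤ δ := le_trans (min_le_right _ _) (min_le_right _ _)
      have ht1 : t ≤ 1 := by
        have h2 : t * Kc < 1 := htK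
        nlinarith
      set y := x + t • U - (Kc*t^2) • W with hy
      have hmemy := hmem t ht0 htK
      have hyx : y - x = t • U - (Kc*t^2) • W := by
        rw [hy]; abel
      have hynorm : ‖y - x‖ ≤ t * Cb := by
        rw [hyx]
        calc ‖t • U - (Kc*t^2) • W‖ ≤ ‖t • U‖ + ‖(Kc*t^2) • W‖ := norm_sub_le _ _
          _ = t * ‖U‖ + (Kc*t^2) * ‖W‖ := by
              rw [norm_smul, norm_smul, Real.norm_eq_abs, Real.norm_eq_abs,
                abs_of_pos ht0, abs_of_pos (mul_pos hKc0 (by positivity : (0:ℝ) < t^2))]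
          _ ≤ t * ‖U‖ + (Kc*t) * ‖W‖ := by
              have : Kc * t^2 ≤ Kc * t := by nlinarith
              have := norm_nonneg W
              nlinarith
          _ ≤ t * Cb := by
              rw [hCb]
              have := norm_nonneg U
              have := norm_nonneg W
              nlinarith
      have hball : y ∈ Metric.ball x ρ := by
        rw [Metric.mem_ball, dist_eq_norm]
        calc ‖y - x‖ ≤ t * Cb := hynorm
          _ ≤ ρ/2 := htCb
          _ < ρ := by linarith
      have happ := hρle y ⟨hmemy, hball⟩
      rw [hyx] at happ
      have hlin : rinner ν (t • U - (Kc*t^2) • W)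
          = t * rinner ν U - (Kc*t^2) * rinner ν W := by
        show (inner ℝ ν (t • U - (Kc*t^2) • W) : ℝ) = t * inner ℝ ν U - (Kc*t^2) * inner ℝ ν W
        rw [inner_sub_right, real_inner_smul_right, real_inner_smul_right]
      rw [hlin] at happ
      have hCS : rinner ν W ≤ ‖W‖ := by
        have := real_inner_le_norm ν W
        rw [hν.1] at this
        simpa [rinner] using this
      have hCS' : -(rinner ν W) ≤ ‖W‖ := by
        have := real_inner_le_norm ν (-W)
        rw [hν.1, inner_neg_right, norm_neg] at this
        show -(inner ℝ ν W : ℝ) ≤ ‖W‖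
        simpa using this
      have hnorm2 : ‖t • U - (Kc*t^2) • W‖ ≤ t * Cb := by rw [← hyx]; exact hynorm
      -- t * rinner ν U ≤ δ * (t * Cb) + Kc*t^2 * rinner ν W ≤ δ t Cb + Kc t^2 ‖W‖
      have h5 : t * rinner ν U ≤ δ * (t * Cb) + Kc*t^2 * ‖W‖ := by
        have h6 : δ * ‖t • U - (Kc*t^2) • W‖ ≤ δ * (t * Cb) :=
          mul_le_mul_of_nonneg_left hnorm2 (le_of_lt hδ)
        have h7 : Kc*t^2 * rinner ν W ≤ Kc*t^2 * ‖W‖ := by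
          apply mul_le_mul_of_nonneg_left hCS
          positivity
        linarith
      have h8 : rinner ν U ≤ δ * Cb + Kc*t * ‖W‖ := by
        have ht0' := ht0
        rw [← mul_le_mul_iff_of_pos_left ht0]
        calc t * rinner ν U ≤ δ * (t * Cb) + Kc*t^2 * ‖W‖ := h5
          _ = t * (δ * Cb + Kc*t * ‖W‖) := by ring
      have h9 : Kc*t*‖W‖ ≤ Kc*δ*‖W‖ :=
        mul_le_mul_of_nonneg_right (mul_le_mul_of_nonneg_left htδ hKc0.le) (norm_nonneg W)
      calc rinner ν U ≤ δ * Cb + Kc*t * ‖W‖ := h8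
        _ ≤ δ * Cb + Kc*δ*‖W‖ := by linarith
        _ = δ * (Cb + Kc * ‖W‖) := by ring
    -- conclude from claim
    by_contra hpos
    push_neg at hpos
    set a := rinner ν U with ha
    set C2 : ℝ := (‖U‖ + Kc*‖W‖ + 1) + Kc * ‖W‖ with hC2
    have hC2pos : 0 < C2 := by
      rw [hC2]
      have h1 : 0 ≤ Kc * ‖W‖ := by positivity
      have := norm_nonneg U
      linarith
    have hcl := claim (a/(2*C2)) (by positivity)
    have : a/(2*C2)*C2 = a/2 := by field_simp
    rw [this] at hcl
    linarith
  -- apply main to uv and -uv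
  have h1 := main uv hinner_wu
  have h2 : (inner ℝ wv (-uv) : ℝ) = 0 := by rw [inner_neg_right, hinner_wu]; ring
  have h3 := main (-uv) h2
  have hnegsnoc : toE (Fin.snoc (-uv) 0) = -(toE (Fin.snoc uv 0)) := by
    ext j
    have hneg : (-(toE (Fin.snoc uv 0)) : EuclideanSpace ℝ (Fin (d+2))) j
        = -(toE (Fin.snoc uv 0) j) := rfl
    rw [hneg]
    induction j using Fin.lastCases with
    | last => simp [toE]
    | cast j' =>
      show (Fin.snoc (-uv) (0:ℝ) : Fin (d+2) → ℝ) (Fin.castSucc j')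
        = -((Fin.snoc uv (0:ℝ) : Fin (d+2) → ℝ) (Fin.castSucc j'))
      rw [Fin.snoc_castSucc, Fin.snoc_castSucc]
      rfl
  rw [hnegsnoc] at h3
  have h4 : rinner ν (-(toE (Fin.snoc uv 0))) = -(rinner ν (toE (Fin.snoc uv 0))) := by
    show (inner ℝ ν (-(toE (Fin.snoc uv 0))) : ℝ) = _
    rw [inner_neg_right]
    rfl
  rw [h4] at h3
  have h5 : rinner ν (toE (Fin.snoc uv 0)) = 0 := le_antisymm h1 (by linarith)
  rw [hvx]
  show (inner ℝ (toE (Fin.snoc uv 0)) ν : ℝ) = 0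
  rw [real_inner_comm]
  exact h5

/-- bounds for `Q` and its derivative on `[0,1]`, plus a Lipschitz estimate. -/
theorem Q_bounds (d : ℕ) (Q : ℝ → Matrix (Fin (d+1)) (Fin (d+1)) ℝ)
    (hQ1 : ∀ i j, ContDiff ℝ 1 (fun z => Q z i j)) :
    ∃ CQ : ℝ, 0 ≤ CQ ∧ (∀ z ∈ Set.Icc (0:ℝ) 1, ∀ i j, |Q z i j| ≤ CQ) ∧
      (∀ z ∈ Set.Icc (0:ℝ) 1, ∀ i j, |deriv (fun t => Q t i j) z| ≤ CQ) ∧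
      (∀ i j, ∀ z ∈ Set.Icc (0:ℝ) 1, ∀ w ∈ Set.Icc (0:ℝ) 1,
        |Q z i j - Q w i j| ≤ CQ * |z - w|) := by
  classical
  set g : ℝ → ℝ := fun z => ∑ i : Fin (d+1), ∑ j : Fin (d+1),
    (|Q z i j| + |deriv (fun t => Q t i j) z|) with hg
  have hgc : ContinuousOn g (Set.Icc (0:ℝ) 1) := by
    apply Continuous.continuousOn
    apply continuous_finset_sum
    intro i _
    apply continuous_finset_sum
    intro j _
    exact ((hQ1 i j).continuous.abs).add (((hQ1 i j).continuous_deriv (by norm_num)).abs)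
  obtain ⟨CQ, hCQ⟩ := isCompact_Icc.exists_bound_of_continuousOn hgc
  have hterm : ∀ z ∈ Set.Icc (0:ℝ) 1, ∀ i j,
      |Q z i j| + |deriv (fun t => Q t i j) z| ≤ CQ := by
    intro z hz i j
    have h1 : |Q z i j| + |deriv (fun t => Q t i j) z| ≤ g z := by
      rw [hg]
      calc |Q z i j| + |deriv (fun t => Q t i j) z|
          ≤ ∑ j' : Fin (d+1), (|Q z i j'| + |deriv (fun t => Q t i j') z|) :=
            Finset.single_le_sum (f := fun j' => |Q z i j'| + |deriv (fun t => Q t i j') z|)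
              (fun j' _ => by positivity) (Finset.mem_univ j)
        _ ≤ ∑ i' : Fin (d+1), ∑ j' : Fin (d+1),
              (|Q z i' j'| + |deriv (fun t => Q t i' j') z|) :=
            Finset.single_le_sum (f := fun i' => ∑ j' : Fin (d+1),
              (|Q z i' j'| + |deriv (fun t => Q t i' j') z|))
              (fun i' _ => by positivity) (Finset.mem_univ i)
    have h2 := hCQ z hz
    have h3 : g z ≤ |g z| := le_abs_self _
    calc |Q z i j| + |deriv (fun t => Q t i j) z| ≤ g z := h1
      _ ≤ |g z| := h3
      _ = ‖g z‖ := rfl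
      _ ≤ CQ := h2
  have hCQ0 : 0 ≤ CQ := by
    have := hterm 0 (by constructor <;> norm_num) 0 0
    have h1 : (0:ℝ) ≤ |Q 0 0 0| + |deriv (fun t => Q t 0 0) 0| := by positivity
    linarith
  refine ⟨CQ, hCQ0, ?_, ?_, ?_⟩
  · intro z hz i j
    have := hterm z hz i j
    have h1 : (0:ℝ) ≤ |deriv (fun t => Q t i j) z| := abs_nonneg _
    linarith
  · intro z hz i j
    have := hterm z hz i j
    have h1 : (0:ℝ) ≤ |Q z i j| := abs_nonneg _
    linarith
  · intro i j z hz w hw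
    have hlip : LipschitzOnWith (Real.toNNReal CQ) (fun t => Q t i j) (Set.Icc (0:ℝ) 1) := by
      apply Convex.lipschitzOnWith_of_nnnorm_fderiv_le (𝕜 := ℝ) (hs := convex_Icc 0 1)
      · intro t _
        exact ((hQ1 i j).differentiable (by norm_num)).differentiableAt
      · intro t ht
        have h1 : ‖fderiv ℝ (fun t => Q t i j) t‖ = ‖deriv (fun t => Q t i j) t‖ :=
          norm_deriv_eq_norm_fderiv.symm
        have h2 : |deriv (fun t => Q t i j) t| ≤ CQ := by
          have := hterm t ht i j
          have := abs_nonneg (Q t i j)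
          linarith
        rw [← NNReal.coe_le_coe]
        rw [coe_nnnorm, Real.coe_toNNReal _ hCQ0, h1]
        exact h2
    have := hlip.dist_le_mul z hz w hw
    rw [Real.dist_eq, Real.dist_eq, Real.coe_toNNReal _ hCQ0] at this
    exact this

theorem vQ_lip (d : ℕ) (X : ℝ → EuclideanSpace ℝ (Fin (d+1))) (r : ℝ → ℝ)
    {KX Kr : ℝ≥0} (hKX : LipschitzWith KX X) (hKr : LipschitzWith Kr r)
    (Q : ℝ → Matrix (Fin (d+1)) (Fin (d+1)) ℝ)
    (hQ1 : ∀ i j, ContDiff ℝ 1 (fun z => Q z i j))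
    (ε : ℝ) (hε : ε ∈ Set.Ioc (0:ℝ) 1) :
    ∃ K : ℝ≥0, LipschitzOnWith K (vQfield d X ε Q)
      (channel (fun z => Metric.ball (X z) (r z)) ε) := by
  classical
  obtain ⟨hε0, hε1⟩ := hε
  obtain ⟨CQ, hCQ0, hQb, hQ'b, hQlip⟩ := Q_bounds d Q hQ1
  -- bound on r over [0,1]
  obtain ⟨Cr, hCr⟩ := isCompact_Icc.exists_bound_of_continuousOn
    (hKr.continuous.continuousOn (s := Set.Icc (0:ℝ) 1))
  have hrb : ∀ z ∈ Set.Icc (0:ℝ) 1, r z ≤ Cr := fun z hz =>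
    le_trans (le_abs_self _) (hCr z hz)
  have hCr0 : 0 ≤ Cr := le_trans (abs_nonneg _) (hCr 0 (by constructor <;> norm_num))
  set KL : ℝ := (d+1 : ℝ) * (CQ * Cr + CQ + CQ * KX) with hKL
  have hKL0 : 0 ≤ KL := by positivity
  set Ω := channel (fun z => Metric.ball (X z) (r z)) ε with hΩ
  refine ⟨Real.toNNReal (Real.sqrt (d+2) * KL), ?_⟩
  apply LipschitzOnWith.of_dist_le_mul
  intro x hx y hy
  set z := x (Fin.last (d+1)) with hz
  set ζ := y (Fin.last (d+1)) with hζ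
  have hzIcc : z ∈ Set.Icc (0:ℝ) 1 := ⟨le_of_lt hx.1.1, le_of_lt hx.1.2⟩
  have hζIcc : ζ ∈ Set.Icc (0:ℝ) 1 := ⟨le_of_lt hy.1.1, le_of_lt hy.1.2⟩
  set D := dist x y with hD
  have hD0 : 0 ≤ D := dist_nonneg
  have hcoordD : ∀ j : Fin (d+2), |x j - y j| ≤ D := by
    intro j
    have h1 : x j - y j = (x - y) j := rfl
    rw [hD, dist_eq_norm, h1]
    exact coord_abs_le_norm (x - y) j
  have hzζ : |z - ζ| ≤ D := hcoordD (Fin.last (d+1))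
  -- coordinate bound for x ∈ Ω
  have hwb : ∀ (p : EuclideanSpace ℝ (Fin (d+2))), p ∈ Ω → ∀ k : Fin (d+1),
      |p (Fin.castSucc k) - ε * X (p (Fin.last (d+1))) k| ≤ Cr := by
    intro p hp k
    have h1 : dist (toE fun i : Fin (d+1) => p (Fin.castSucc i) / ε)
        (X (p (Fin.last (d+1)))) < r (p (Fin.last (d+1))) := hp.2
    have h2 : |p (Fin.castSucc k) / ε - X (p (Fin.last (d+1))) k|
        ≤ dist (toE fun i : Fin (d+1) => p (Fin.castSucc i) / ε) (X (p (Fin.last (d+1)))) := by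
      rw [dist_eq_norm]
      have h3 : p (Fin.castSucc k) / ε - X (p (Fin.last (d+1))) k
          = ((toE fun i : Fin (d+1) => p (Fin.castSucc i) / ε) - X (p (Fin.last (d+1)))) k := rfl
      rw [h3]
      exact coord_abs_le_norm _ k
    have h4 : r (p (Fin.last (d+1))) ≤ Cr := hrb _ ⟨le_of_lt hp.1.1, le_of_lt hp.1.2⟩
    have h5 : p (Fin.castSucc k) - ε * X (p (Fin.last (d+1))) k
        = ε * (p (Fin.castSucc k) / ε - X (p (Fin.last (d+1))) k) := by
      field_simp
    rw [h5, abs_mul, abs_of_pos hε0]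
    calc ε * |p (Fin.castSucc k) / ε - X (p (Fin.last (d+1))) k| ≤ ε * Cr := by
          apply mul_le_mul_of_nonneg_left _ (le_of_lt hε0)
          linarith
      _ ≤ 1 * Cr := by nlinarith
      _ = Cr := one_mul Cr
  -- per-coordinate bound on the difference
  have hcomp : ∀ j : Fin (d+2), |vQfield d X ε Q x j - vQfield d X ε Q y j| ≤ KL * D := by
    intro j
    induction j using Fin.lastCases with
    | last =>
      have h1 : vQfield d X ε Q x (Fin.last (d+1)) = 0 := by simp [vQfield, toE]
      have h2 : vQfield d X ε Q y (Fin.last (d+1)) = 0 := by simp [vQfield, toE]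
      rw [h1, h2]
      simpa using mul_nonneg hKL0 hD0
    | cast j' =>
      have h1 : vQfield d X ε Q x (Fin.castSucc j')
          = ∑ k : Fin (d+1), Q z j' k * (x (Fin.castSucc k) - ε * X z k) := by
        simp only [vQfield, toE, dif_neg (Fin.castSucc_lt_last j').ne, Fin.castPred_castSucc]; rfl
      have h2 : vQfield d X ε Q y (Fin.castSucc j')
          = ∑ k : Fin (d+1), Q ζ j' k * (y (Fin.castSucc k) - ε * X ζ k) := by
        simp only [vQfield, toE, dif_neg (Fin.castSucc_lt_last j').ne, Fin.castPred_castSucc]; rfl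
      rw [h1, h2, ← Finset.sum_sub_distrib]
      calc |∑ k : Fin (d+1), (Q z j' k * (x (Fin.castSucc k) - ε * X z k)
              - Q ζ j' k * (y (Fin.castSucc k) - ε * X ζ k))|
          ≤ ∑ k : Fin (d+1), |Q z j' k * (x (Fin.castSucc k) - ε * X z k)
              - Q ζ j' k * (y (Fin.castSucc k) - ε * X ζ k)| := Finset.abs_sum_le_sum_abs _ _
        _ ≤ ∑ _k : Fin (d+1), (CQ * Cr + CQ + CQ * KX) * D := by
            apply Finset.sum_le_sum
            intro k _
            have hsplit : Q z j' k * (x (Fin.castSucc k) - ε * X z k)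
                - Q ζ j' k * (y (Fin.castSucc k) - ε * X ζ k)
                = (Q z j' k - Q ζ j' k) * (x (Fin.castSucc k) - ε * X z k)
                  + Q ζ j' k * ((x (Fin.castSucc k) - y (Fin.castSucc k))
                    - ε * (X z k - X ζ k)) := by ring
            rw [hsplit]
            have e1 : |Q z j' k - Q ζ j' k| ≤ CQ * |z - ζ| := hQlip j' k z hzIcc ζ hζIcc
            have e2 : |x (Fin.castSucc k) - ε * X z k| ≤ Cr := hwb x hx k
            have e3 : |Q ζ j' k| ≤ CQ := hQb ζ hζIcc j' k
            have e4 : |x (Fin.castSucc k) - y (Fin.castSucc k)| ≤ D := hcoordD _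
            have e5 : |X z k - X ζ k| ≤ (KX : ℝ) * |z - ζ| := by
              have h6 : X z k - X ζ k = (X z - X ζ) k := rfl
              rw [h6]
              calc |(X z - X ζ) k| ≤ ‖X z - X ζ‖ := coord_abs_le_norm _ k
                _ = dist (X z) (X ζ) := (dist_eq_norm _ _).symm
                _ ≤ (KX : ℝ) * dist z ζ := hKX.dist_le_mul z ζ
                _ = (KX : ℝ) * |z - ζ| := by rw [Real.dist_eq]
            calc |(Q z j' k - Q ζ j' k) * (x (Fin.castSucc k) - ε * X z k)
                + Q ζ j' k * ((x (Fin.castSucc k) - y (Fin.castSucc k))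
                  - ε * (X z k - X ζ k))|
                ≤ |Q z j' k - Q ζ j' k| * |x (Fin.castSucc k) - ε * X z k|
                  + |Q ζ j' k| * (|x (Fin.castSucc k) - y (Fin.castSucc k)|
                    + ε * |X z k - X ζ k|) := by
                  have t1 := abs_add_le ((Q z j' k - Q ζ j' k) * (x (Fin.castSucc k) - ε * X z k))
                    (Q ζ j' k * ((x (Fin.castSucc k) - y (Fin.castSucc k)) - ε * (X z k - X ζ k)))
                  have t2 : |(Q z j' k - Q ζ j' k) * (x (Fin.castSucc k) - ε * X z k)|
                      = |Q z j' k - Q ζ j' k| * |x (Fin.castSucc k) - ε * X z k| := abs_mul _ _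
                  have t3 : |Q ζ j' k * ((x (Fin.castSucc k) - y (Fin.castSucc k))
                      - ε * (X z k - X ζ k))| ≤ |Q ζ j' k|
                      * (|x (Fin.castSucc k) - y (Fin.castSucc k)| + ε * |X z k - X ζ k|) := by
                    rw [abs_mul]
                    apply mul_le_mul_of_nonneg_left _ (abs_nonneg _)
                    calc |(x (Fin.castSucc k) - y (Fin.castSucc k)) - ε * (X z k - X ζ k)|
                        ≤ |x (Fin.castSucc k) - y (Fin.castSucc k)| + |ε * (X z k - X ζ k)| :=
                          abs_sub _ _
                      _ = |x (Fin.castSucc k) - y (Fin.castSucc k)| + ε * |X z k - X ζ k| := by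
                          rw [abs_mul, abs_of_pos hε0]
                  linarith
              _ ≤ (CQ * |z - ζ|) * Cr + CQ * (D + 1 * ((KX:ℝ) * |z - ζ|)) := by
                  have u1 : |Q z j' k - Q ζ j' k| * |x (Fin.castSucc k) - ε * X z k|
                      ≤ (CQ * |z - ζ|) * Cr := by
                    apply mul_le_mul e1 e2 (abs_nonneg _) (by positivity)
                  have u2 : |Q ζ j' k| * (|x (Fin.castSucc k) - y (Fin.castSucc k)|
                      + ε * |X z k - X ζ k|) ≤ CQ * (D + 1 * ((KX:ℝ) * |z - ζ|)) := by
                    apply mul_le_mul e3 _ (by positivity) hCQ0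
                    have u3 : ε * |X z k - X ζ k| ≤ 1 * ((KX:ℝ) * |z - ζ|) := by
                      apply mul_le_mul hε1 e5 (abs_nonneg _) one_pos.le
                    linarith
                  linarith
              _ ≤ (CQ * Cr + CQ + CQ * KX) * D := by
                  have u4 : CQ * |z - ζ| * Cr ≤ CQ * Cr * D := by
                    have := mul_le_mul_of_nonneg_left hzζ (by positivity : (0:ℝ) ≤ CQ * Cr)
                    nlinarith
                  have u5 : CQ * (D + 1 * ((KX:ℝ) * |z - ζ|)) ≤ CQ * D + CQ * KX * D := by
                    have u6 : (KX:ℝ) * |z - ζ| ≤ (KX:ℝ) * D :=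
                      mul_le_mul_of_nonneg_left hzζ KX.coe_nonneg
                    nlinarith
                  linarith
        _ = KL * D := by
            rw [Finset.sum_const, Finset.card_univ, Fintype.card_fin, hKL]
            push_cast
            ring
  -- assemble
  have hnorm : dist (vQfield d X ε Q x) (vQfield d X ε Q y) ≤ Real.sqrt (d+2) * (KL * D) := by
    rw [dist_eq_norm]
    have h7 : ∀ j : Fin (d+2), |(vQfield d X ε Q x - vQfield d X ε Q y) j| ≤ KL * D := by
      intro j
      have h8 : (vQfield d X ε Q x - vQfield d X ε Q y) j
          = vQfield d X ε Q x j - vQfield d X ε Q y j := rfl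
      rw [h8]; exact hcomp j
    have := norm_le_of_coords (vQfield d X ε Q x - vQfield d X ε Q y) (KL * D) h7
    calc ‖vQfield d X ε Q x - vQfield d X ε Q y‖
        ≤ Real.sqrt ((d+2 : ℕ) : ℝ) * (KL * D) := this
      _ = Real.sqrt (d+2) * (KL * D) := by norm_num
  calc dist (vQfield d X ε Q x) (vQfield d X ε Q y) ≤ Real.sqrt (d+2) * (KL * D) := hnorm
    _ = (Real.sqrt (d+2) * KL) * D := by ring
    _ ≤ (Real.toNNReal (Real.sqrt (d+2) * KL) : ℝ) * D := by
        apply mul_le_mul_of_nonneg_right _ hD0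
        rw [Real.coe_toNNReal _ (by positivity)]
    _ = (Real.toNNReal (Real.sqrt (d+2) * KL) : ℝ) * dist x y := rfl

theorem xh_continuous (d : ℕ) :
    Continuous (fun x : EuclideanSpace ℝ (Fin (d+2)) =>
      (toE fun i : Fin (d+1) => x (Fin.castSucc i))) := by
  have : Continuous (fun x : EuclideanSpace ℝ (Fin (d+2)) => (fun i : Fin (d+1) =>
      x (Fin.castSucc i) : Fin (d+1) → ℝ)) := by
    apply continuous_pi
    intro i
    exact (EuclideanSpace.proj (𝕜 := ℝ) (Fin.castSucc i) :
      EuclideanSpace ℝ (Fin (d+2)) →L[ℝ] ℝ).continuous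
  exact (PiLp.continuousLinearEquiv 2 ℝ (fun _ : Fin (d+1) => ℝ)).symm.continuous.comp this

theorem cyl_measurable (d : ℕ) (A : Set ℝ) (B : Set (EuclideanSpace ℝ (Fin (d+1))))
    (hA : MeasurableSet A) (hB : MeasurableSet B) :
    MeasurableSet {x : EuclideanSpace ℝ (Fin (d+2)) | x (Fin.last (d+1)) ∈ A ∧
      (toE fun i : Fin (d+1) => x (Fin.castSucc i)) ∈ B} := by
  have heq : {x : EuclideanSpace ℝ (Fin (d+2)) | x (Fin.last (d+1)) ∈ A ∧
      (toE fun i : Fin (d+1) => x (Fin.castSucc i)) ∈ B}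
      = (fun x : EuclideanSpace ℝ (Fin (d+2)) => (x (Fin.last (d+1)),
          (toE fun i : Fin (d+1) => x (Fin.castSucc i)))) ⁻¹' (A ×ˢ B) := by
    ext x; simp [Set.mem_prod]
  rw [heq]
  exact (((proj_last_continuous d).prodMk (xh_continuous d)).measurable) (hA.prod hB)

theorem calc_ceq (a b c e Rv V : ℝ) (he : e ≠ 0) (hRv : Rv ≠ 0) (hV : V ≠ 0) (n : ℕ) :
    a * (2*b*c^n) / Rv^n = ((e*Rv)^n * V)⁻¹ * (a * (2*b*((e*c)^n * V))) := by
  rw [mul_pow, mul_pow]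
  field_simp


/-- for circular cross sections, the rotational fields
`v^ε(x_h,z) = (Q(z)(x_h − εX(z)), 0)` built from a nonzero skew-symmetric path `Q`
vanishing at the endpoints belong to `W^{1,2}`, satisfy the boundary conditions, and
exhibit the `ε²` degeneration of the Korn constant. -/
theorem rotational_fields_degenerate_korn (d : ℕ)
    (X : ℝ → EuclideanSpace ℝ (Fin (d+1))) (r : ℝ → ℝ)
    (hX : ∃ K : ℝ≥0, LipschitzWith K X) (hr : ∃ K : ℝ≥0, LipschitzWith K r)
    (hrpos : ∀ z ∈ Set.Icc (0:ℝ) 1, 0 < r z)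
    (Q : ℝ → Matrix (Fin (d+1)) (Fin (d+1)) ℝ) (hQ : memI d Q)
    (hQne : ∃ z ∈ Set.Icc (0:ℝ) 1, Q z ≠ 0) :
    ∃ c C : ℝ, 0 < c ∧ 0 < C ∧ ∀ ε : ℝ, ε ∈ Set.Ioc (0:ℝ) 1 →
      (∃ K : ℝ≥0, LipschitzOnWith K (vQfield d X ε Q)
          (channel (fun z => Metric.ball (X z) (r z)) ε)) ∧
      normalBC (channel (fun z => Metric.ball (X z) (r z)) ε) (vQfield d X ε Q) ∧
      endsZero (channel (fun z => Metric.ball (X z) (r z)) ε) (vQfield d X ε Q) ∧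
      c ≤ ⨍ x in channel (fun z => Metric.ball (X z) (r z)) ε,
            frob2 (gradM (vQfield d X ε Q) x) ∧
      ⨍ x in channel (fun z => Metric.ball (X z) (r z)) ε,
          frob2 (symPart (gradM (vQfield d X ε Q) x)) ≤ C * ε ^ 2 := by
  classical
  obtain ⟨KX, hKX⟩ := hX
  obtain ⟨Kr, hKr⟩ := hr
  obtain ⟨hQ1, hQskew, hQz0, hQz1⟩ := hQ
  obtain ⟨CQ, hCQ0, hQb, hQ'b, hQlip⟩ := Q_bounds d Q hQ1
  -- bounds on X and r over [0,1]
  obtain ⟨CX, hCX⟩ := isCompact_Icc.exists_bound_of_continuousOn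
    (hKX.continuous.continuousOn (s := Set.Icc (0:ℝ) 1))
  obtain ⟨Cr, hCr⟩ := isCompact_Icc.exists_bound_of_continuousOn
    (hKr.continuous.continuousOn (s := Set.Icc (0:ℝ) 1))
  have hrb : ∀ z ∈ Set.Icc (0:ℝ) 1, r z ≤ Cr := fun z hz =>
    le_trans (le_abs_self _) (hCr z hz)
  have hCX0 : 0 ≤ CX := le_trans (norm_nonneg _) (hCX 0 ⟨le_refl 0, zero_le_one⟩)
  have hCr0 : 0 ≤ Cr := le_trans (abs_nonneg _) (hCr 0 ⟨le_refl 0, zero_le_one⟩)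
  -- derivative bound for coordinates of X
  have hX'b : ∀ (z : ℝ) (k : Fin (d+1)), |deriv (fun t => X t k) z| ≤ KX := by
    intro z k
    apply abs_deriv_le_of_lipschitz (K := KX) _ z
    apply LipschitzWith.of_dist_le_mul
    intro a b
    have h1 : X a k - X b k = (X a - X b) k := rfl
    rw [Real.dist_eq, h1]
    calc |(X a - X b) k| ≤ ‖X a - X b‖ := coord_abs_le_norm _ k
      _ = dist (X a) (X b) := (dist_eq_norm _ _).symm
      _ ≤ KX * dist a b := hKX.dist_le_mul a b
  -- the point z₀ and the plateau
  obtain ⟨z₀, hz₀Icc, hQz₀ne⟩ := hQne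
  set F : ℝ → ℝ := fun z => ∑ i, ∑ j, (Q z i j)^2 with hF
  have hFc : Continuous F := by
    apply continuous_finset_sum
    intro i _
    apply continuous_finset_sum
    intro j _
    exact ((hQ1 i j).continuous).pow 2
  have hF0 : 0 < F z₀ := by
    have h1 : ¬ (∀ i j, Q z₀ i j = 0) := by
      intro h
      apply hQz₀ne
      ext i j
      exact h i j
    push_neg at h1
    obtain ⟨i, j, hij⟩ := h1
    have h2 : (Q z₀ i j)^2 ≤ F z₀ := by
      rw [hF]
      calc (Q z₀ i j)^2 ≤ ∑ j', (Q z₀ i j')^2 :=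
          Finset.single_le_sum (f := fun j' => (Q z₀ i j')^2)
            (fun j' _ => sq_nonneg _) (Finset.mem_univ j)
        _ ≤ ∑ i', ∑ j', (Q z₀ i' j')^2 :=
          Finset.single_le_sum (f := fun i' => ∑ j', (Q z₀ i' j')^2)
            (fun i' _ => Finset.sum_nonneg fun j' _ => sq_nonneg _) (Finset.mem_univ i)
    have h3 : 0 < (Q z₀ i j)^2 := by positivity
    linarith
  have hz₀Ioo : z₀ ∈ Set.Ioo (0:ℝ) 1 := by
    constructor
    · rcases lt_or_eq_of_le hz₀Icc.1 with h | h
      · exact h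
      · exfalso; apply hQz₀ne; rw [← h]; exact hQz0
    · rcases lt_or_eq_of_le hz₀Icc.2 with h | h
      · exact h
      · exfalso; apply hQz₀ne; rw [h]; exact hQz1
  set m₁ : ℝ := F z₀ / 2 with hm₁
  have hm₁0 : 0 < m₁ := by rw [hm₁]; linarith
  obtain ⟨δF, hδF0, hδF⟩ := Metric.continuousAt_iff.1 hFc.continuousAt m₁ hm₁0
  set r₀ : ℝ := r z₀ with hr₀def
  have hr₀ : 0 < r₀ := hrpos z₀ hz₀Icc
  set η : ℝ := min (δF/2) (min (min (z₀/2) ((1-z₀)/2)) (r₀/(4*((KX:ℝ)+(Kr:ℝ)+1)))) with hη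
  have hη0 : 0 < η := by
    apply lt_min (by linarith)
    apply lt_min (lt_min (by linarith [hz₀Ioo.1]) (by linarith [hz₀Ioo.2]))
    have : (0:ℝ) < (KX:ℝ)+(Kr:ℝ)+1 := by positivity
    positivity
  have hηz₀ : η ≤ z₀/2 := le_trans (min_le_right _ _) (le_trans (min_le_left _ _) (min_le_left _ _))
  have hηz₁ : η ≤ (1-z₀)/2 := le_trans (min_le_right _ _) (le_trans (min_le_left _ _) (min_le_right _ _))
  have hηδ : η ≤ δF/2 := min_le_left _ _
  have hηr : η ≤ r₀/(4*((KX:ℝ)+(Kr:ℝ)+1)) := le_trans (min_le_right _ _) (min_le_right _ _)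
  have hI1 : 0 < z₀ - η := by linarith [hz₀Ioo.1]
  have hI2 : z₀ + η < 1 := by linarith [hz₀Ioo.2]
  have hFlo : ∀ z ∈ Set.Icc (z₀-η) (z₀+η), m₁ ≤ F z := by
    intro z hz
    have h1 : dist z z₀ < δF := by
      rw [Real.dist_eq, abs_sub_lt_iff]
      have h0 := hz.1; have h0' := hz.2
      constructor <;> linarith
    have h2 := hδF h1
    rw [Real.dist_eq] at h2
    have h3 : |F z - F z₀| < m₁ := h2
    have h4 : F z₀ - F z ≤ |F z - F z₀| := by
      rw [abs_sub_comm]; exact le_abs_self _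
    rw [hm₁] at *
    linarith
  have hηK : ((KX:ℝ)+(Kr:ℝ))*η < r₀/2 := by
    have h1 : (0:ℝ) < 4*((KX:ℝ)+(Kr:ℝ)+1) := by positivity
    have h2 : ((KX:ℝ)+(Kr:ℝ))*η ≤ ((KX:ℝ)+(Kr:ℝ)) * (r₀/(4*((KX:ℝ)+(Kr:ℝ)+1))) := by
      apply mul_le_mul_of_nonneg_left hηr (by positivity)
    have h3 : ((KX:ℝ)+(Kr:ℝ)) * (r₀/(4*((KX:ℝ)+(Kr:ℝ)+1))) < r₀/2 := by
      set a : ℝ := (KX:ℝ)+(Kr:ℝ) with ha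
      have ha0 : 0 ≤ a := by positivity
      have ha1 : (0:ℝ) < a + 1 := by linarith
      have key : a * (r₀/(4*(a+1))) = (a/(a+1)) * (r₀/4) := by
        rw [div_mul_div_comm, mul_comm (a+1) 4, mul_div_assoc]
      rw [key]
      have h4 : a/(a+1) < 1 := (div_lt_one ha1).2 (by linarith)
      have h5 : (0:ℝ) < r₀/4 := by positivity
      nlinarith
    linarith
  -- global constants
  set R : ℝ := CX + Cr + 1 with hR
  have hR0 : 0 < R := by rw [hR]; linarith
  set Vb : ℝ≥0∞ := volume (Metric.ball (0 : EuclideanSpace ℝ (Fin (d+1))) 1) with hVb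
  have hVb0 : 0 < Vb := measure_ball_pos _ _ one_pos
  have hVbfin : Vb < ⊤ := measure_ball_lt_top
  set Vbr : ℝ := Vb.toReal with hVbr
  have hVbr0 : 0 < Vbr := ENNReal.toReal_pos hVb0.ne' hVbfin.ne
  set C₁ : ℝ := ((d:ℝ)+1)*(CQ*(KX:ℝ) + Cr*CQ) with hC₁
  have hC₁0 : 0 ≤ C₁ := by positivity
  set C₀ : ℝ := 2⁻¹*((d:ℝ)+1)*C₁^2 with hC₀
  have hC₀0 : 0 ≤ C₀ := by positivity
  set Bf : ℝ := ((d:ℝ)+1)^2*CQ^2 + ((d:ℝ)+1)*C₁^2 with hBf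
  have hBf0 : 0 ≤ Bf := by positivity
  set cc : ℝ := m₁ * (2*η*(r₀/2)^(d+1)) / R^(d+1) with hcc
  have hcc0 : 0 < cc := by
    rw [hcc]
    have h1 : (0:ℝ) < (r₀/2)^(d+1) := by positivity
    have h2 : (0:ℝ) < R^(d+1) := by positivity
    positivity
  refine ⟨cc, C₀ + 1, hcc0, by linarith, ?_⟩
  intro ε hε
  obtain ⟨hε0, hε1⟩ := hε
  set Ω := channel (fun z => Metric.ball (X z) (r z)) ε with hΩ
  set v := vQfield d X ε Q with hv
  have hopen : IsOpen Ω := chan_open d X r hKX.continuous hKr.continuous ε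
  have hΩmeas : MeasurableSet Ω := hopen.measurableSet
  have hlip := vQ_lip d X r hKX hKr Q hQ1 ε ⟨hε0, hε1⟩
  have hnbc := vQ_normalBC d X r hKX.continuous hKr.continuous hrpos ε hε0 Q hQskew hQz0 hQz1
  have hends : endsZero Ω v := by
    intro x _ hx
    exact vQ_ends d X ε Q hQz0 hQz1 x hx
  -- coordinate bound on the channel
  have hwnorm : ∀ x ∈ Ω, ∀ k : Fin (d+1),
      |x (Fin.castSucc k) - ε * X (x (Fin.last (d+1))) k| ≤ ε * Cr := by
    intro x hx k
    have h1 : dist (toE fun i : Fin (d+1) => x (Fin.castSucc i) / ε)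
        (X (x (Fin.last (d+1)))) < r (x (Fin.last (d+1))) := hx.2
    have h2 : |x (Fin.castSucc k) / ε - X (x (Fin.last (d+1))) k|
        ≤ dist (toE fun i : Fin (d+1) => x (Fin.castSucc i) / ε) (X (x (Fin.last (d+1)))) := by
      rw [dist_eq_norm]
      exact coord_abs_le_norm ((toE fun i : Fin (d+1) => x (Fin.castSucc i) / ε)
        - X (x (Fin.last (d+1)))) k
    have h4 : r (x (Fin.last (d+1))) ≤ Cr := hrb _ ⟨le_of_lt hx.1.1, le_of_lt hx.1.2⟩
    have h5 : x (Fin.castSucc k) - ε * X (x (Fin.last (d+1))) k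
        = ε * (x (Fin.castSucc k) / ε - X (x (Fin.last (d+1))) k) := by
      field_simp
    rw [h5, abs_mul, abs_of_pos hε0]
    apply mul_le_mul_of_nonneg_left _ (le_of_lt hε0)
    linarith
  -- column bound
  have hcolb : ∀ x ∈ Ω, ∀ i' : Fin (d+1), |vcol d X ε Q x i'| ≤ ε * C₁ := by
    intro x hx i'
    have hzIcc' : x (Fin.last (d+1)) ∈ Set.Icc (0:ℝ) 1 :=
      ⟨le_of_lt hx.1.1, le_of_lt hx.1.2⟩
    rw [vcol]
    calc |∑ k : Fin (d+1),
        (Q (x (Fin.last (d+1))) i' k * (0 - ε * deriv (fun t => X t k) (x (Fin.last (d+1))))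
          + (x (Fin.castSucc k) - ε * X (x (Fin.last (d+1))) k) *
            deriv (fun t => Q t i' k) (x (Fin.last (d+1))))|
        ≤ ∑ k : Fin (d+1), |Q (x (Fin.last (d+1))) i' k *
            (0 - ε * deriv (fun t => X t k) (x (Fin.last (d+1))))
          + (x (Fin.castSucc k) - ε * X (x (Fin.last (d+1))) k) *
            deriv (fun t => Q t i' k) (x (Fin.last (d+1)))| := Finset.abs_sum_le_sum_abs _ _
      _ ≤ ∑ _k : Fin (d+1), (CQ*(ε*(KX:ℝ)) + (ε*Cr)*CQ) := by
          apply Finset.sum_le_sum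
          intro k _
          have e1 : |Q (x (Fin.last (d+1))) i' k| ≤ CQ := hQb _ hzIcc' i' k
          have e2 : |0 - ε * deriv (fun t => X t k) (x (Fin.last (d+1)))| ≤ ε * (KX:ℝ) := by
            rw [zero_sub, abs_neg, abs_mul, abs_of_pos hε0]
            exact mul_le_mul_of_nonneg_left (hX'b _ k) (le_of_lt hε0)
          have e3 : |x (Fin.castSucc k) - ε * X (x (Fin.last (d+1))) k| ≤ ε * Cr :=
            hwnorm x hx k
          have e4 : |deriv (fun t => Q t i' k) (x (Fin.last (d+1)))| ≤ CQ := hQ'b _ hzIcc' i' k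
          calc |Q (x (Fin.last (d+1))) i' k *
              (0 - ε * deriv (fun t => X t k) (x (Fin.last (d+1))))
              + (x (Fin.castSucc k) - ε * X (x (Fin.last (d+1))) k) *
                deriv (fun t => Q t i' k) (x (Fin.last (d+1)))|
              ≤ |Q (x (Fin.last (d+1))) i' k| * |0 - ε * deriv (fun t => X t k) (x (Fin.last (d+1)))|
                + |x (Fin.castSucc k) - ε * X (x (Fin.last (d+1))) k| *
                  |deriv (fun t => Q t i' k) (x (Fin.last (d+1)))| := by
                calc _ ≤ |Q (x (Fin.last (d+1))) i' k *
                    (0 - ε * deriv (fun t => X t k) (x (Fin.last (d+1))))|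
                    + |(x (Fin.castSucc k) - ε * X (x (Fin.last (d+1))) k) *
                      deriv (fun t => Q t i' k) (x (Fin.last (d+1)))| := abs_add_le _ _
                  _ = _ := by rw [abs_mul, abs_mul]
            _ ≤ CQ*(ε*(KX:ℝ)) + (ε*Cr)*CQ := by
                have u1 := mul_le_mul e1 e2 (abs_nonneg _) hCQ0
                have u2 := mul_le_mul e3 e4 (abs_nonneg _) (by positivity : (0:ℝ) ≤ ε * Cr)
                linarith
      _ = ε * C₁ := by
          rw [Finset.sum_const, Finset.card_univ, Fintype.card_fin, hC₁]
          push_cast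
          ring
  -- gradient formulas
  have hfeq : ∀ x : EuclideanSpace ℝ (Fin (d+2)), DifferentiableAt ℝ X (x (Fin.last (d+1))) →
      frob2 (gradM v x) = F (x (Fin.last (d+1))) + ∑ i', (vcol d X ε Q x i')^2 := by
    intro x hdx
    obtain ⟨h1, h2, h3⟩ := gradM_vQ d X ε Q hQ1 x hdx
    exact frob2_eq _ (Q (x (Fin.last (d+1)))) (vcol d X ε Q x) h1 h2 h3
  have hgeq : ∀ x : EuclideanSpace ℝ (Fin (d+2)), DifferentiableAt ℝ X (x (Fin.last (d+1))) →
      frob2 (symPart (gradM v x)) = 2⁻¹ * ∑ i', (vcol d X ε Q x i')^2 := by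
    intro x hdx
    obtain ⟨h1, h2, h3⟩ := gradM_vQ d X ε Q hQ1 x hdx
    exact frob2_sym_eq _ (Q (x (Fin.last (d+1)))) (vcol d X ε Q x)
      (hQskew _) h1 h2 h3
  -- a.e. differentiability
  have hbadz : volume {t : ℝ | ¬ DifferentiableAt ℝ X t} = 0 := by
    have h1 := hKX.ae_differentiableAt (μ := volume)
    rwa [ae_iff] at h1
  have hbad : volume {x : EuclideanSpace ℝ (Fin (d+2)) |
      ¬ DifferentiableAt ℝ X (x (Fin.last (d+1)))} = 0 := by
    have h1 : {x : EuclideanSpace ℝ (Fin (d+2)) | ¬ DifferentiableAt ℝ X (x (Fin.last (d+1)))}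
        = {x : EuclideanSpace ℝ (Fin (d+2)) | x (Fin.last (d+1)) ∈ ({t : ℝ | DifferentiableAt ℝ X t}ᶜ)
          ∧ (toE fun i : Fin (d+1) => x (Fin.castSucc i)) ∈ Set.univ} := by
      ext x; simp [Set.mem_compl_iff]
    rw [h1, cyl_volume d _ _ ((measurableSet_of_differentiableAt ℝ X).compl) MeasurableSet.univ,
      Set.compl_setOf, hbadz, zero_mul]
  have haegen : ∀ᵐ x : EuclideanSpace ℝ (Fin (d+2)) ∂volume,
      DifferentiableAt ℝ X (x (Fin.last (d+1))) := by
    rw [ae_iff]; exact hbad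
  have haeΩ : ∀ᵐ x ∂(volume.restrict Ω), DifferentiableAt ℝ X (x (Fin.last (d+1))) :=
    ae_restrict_of_ae haegen
  -- measurability
  have hmeasent : ∀ i j : Fin (d+2), Measurable (fun x => gradM v x i j) := by
    intro i j
    have h1 : Measurable (fun x => fderiv ℝ v x (EuclideanSpace.single j 1)) :=
      measurable_fderiv_apply_const ℝ v _
    have h2 : Continuous (fun w : EuclideanSpace ℝ (Fin (d+2)) => w i) :=
      (EuclideanSpace.proj (𝕜 := ℝ) i : EuclideanSpace ℝ (Fin (d+2)) →L[ℝ] ℝ).continuous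
    exact h2.measurable.comp h1
  have hmf : Measurable (fun x => frob2 (gradM v x)) := by
    have heq2 : (fun x => frob2 (gradM v x)) = fun x => ∑ i, ∑ j, (gradM v x i j)^2 := rfl
    rw [heq2]
    apply Finset.measurable_sum
    intro i _
    apply Finset.measurable_sum
    intro j _
    exact (hmeasent i j).pow_const 2
  have hmg : Measurable (fun x => frob2 (symPart (gradM v x))) := by
    have heq2 : (fun x => frob2 (symPart (gradM v x)))
        = fun x => ∑ i, ∑ j, ((gradM v x i j + gradM v x j i)/2)^2 := by
      funext x
      exact Finset.sum_congr rfl fun i _ => Finset.sum_congr rfl fun j _ => by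
        rw [symPart_apply]
    rw [heq2]
    apply Finset.measurable_sum
    intro i _
    apply Finset.measurable_sum
    intro j _
    exact (((hmeasent i j).add (hmeasent j i)).div_const 2).pow_const 2
  have hf0 : ∀ x, 0 ≤ frob2 (gradM v x) := fun x =>
    Finset.sum_nonneg fun i _ => Finset.sum_nonneg fun j _ => sq_nonneg _
  have hg0 : ∀ x, 0 ≤ frob2 (symPart (gradM v x)) := fun x =>
    Finset.sum_nonneg fun i _ => Finset.sum_nonneg fun j _ => sq_nonneg _
  -- volume bounds
  have hΩsub : Ω ⊆ {x : EuclideanSpace ℝ (Fin (d+2)) | x (Fin.last (d+1)) ∈ Set.Ioo (0:ℝ) 1 ∧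
      (toE fun i : Fin (d+1) => x (Fin.castSucc i)) ∈
        Metric.closedBall (0 : EuclideanSpace ℝ (Fin (d+1))) (ε*R)} := by
    intro x hx
    refine ⟨hx.1, ?_⟩
    rw [Metric.mem_closedBall, dist_zero_right]
    have hxh : (toE fun i : Fin (d+1) => x (Fin.castSucc i))
        = ε • (toE fun i : Fin (d+1) => x (Fin.castSucc i) / ε) := by
      ext i
      show x (Fin.castSucc i) = ε * (x (Fin.castSucc i) / ε)
      field_simp
    rw [hxh, norm_smul, Real.norm_eq_abs, abs_of_pos hε0]
    have h1 : ‖(toE fun i : Fin (d+1) => x (Fin.castSucc i) / ε)‖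
        ≤ dist (toE fun i : Fin (d+1) => x (Fin.castSucc i) / ε) (X (x (Fin.last (d+1))))
          + ‖X (x (Fin.last (d+1)))‖ := by
      calc ‖(toE fun i : Fin (d+1) => x (Fin.castSucc i) / ε)‖
          = ‖((toE fun i : Fin (d+1) => x (Fin.castSucc i) / ε) - X (x (Fin.last (d+1))))
            + X (x (Fin.last (d+1)))‖ := by rw [sub_add_cancel]
        _ ≤ ‖(toE fun i : Fin (d+1) => x (Fin.castSucc i) / ε) - X (x (Fin.last (d+1)))‖
            + ‖X (x (Fin.last (d+1)))‖ := norm_add_le _ _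
        _ = _ := by rw [dist_eq_norm]
    have h2 : dist (toE fun i : Fin (d+1) => x (Fin.castSucc i) / ε)
        (X (x (Fin.last (d+1)))) < r (x (Fin.last (d+1))) := hx.2
    have hzIcc' : x (Fin.last (d+1)) ∈ Set.Icc (0:ℝ) 1 := ⟨le_of_lt hx.1.1, le_of_lt hx.1.2⟩
    have h3 : r (x (Fin.last (d+1))) ≤ Cr := hrb _ hzIcc'
    have h4 : ‖X (x (Fin.last (d+1)))‖ ≤ CX := hCX _ hzIcc'
    have h5 : ‖(toE fun i : Fin (d+1) => x (Fin.castSucc i) / ε)‖ ≤ R := by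
      rw [hR]; linarith
    exact mul_le_mul_of_nonneg_left h5 (le_of_lt hε0)
  have hvolΩ_le : volume Ω ≤ ENNReal.ofReal ((ε*R)^(d+1)) * Vb := by
    calc volume Ω ≤ volume {x : EuclideanSpace ℝ (Fin (d+2)) |
          x (Fin.last (d+1)) ∈ Set.Ioo (0:ℝ) 1 ∧
          (toE fun i : Fin (d+1) => x (Fin.castSucc i)) ∈
            Metric.closedBall (0 : EuclideanSpace ℝ (Fin (d+1))) (ε*R)} :=
        measure_mono hΩsub
      _ = volume (Set.Ioo (0:ℝ) 1) *
          volume (Metric.closedBall (0 : EuclideanSpace ℝ (Fin (d+1))) (ε*R)) :=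
        cyl_volume d _ _ measurableSet_Ioo measurableSet_closedBall
      _ = ENNReal.ofReal ((ε*R)^(d+1)) * Vb := by
        rw [Real.volume_Ioo,
          Measure.addHaar_closedBall _ _ (by positivity : (0:ℝ) ≤ ε*R),
          finrank_euclideanSpace_fin]
        norm_num [hVb]
  -- the inner cylinder P
  set ctr : EuclideanSpace ℝ (Fin (d+1)) := toE fun i : Fin (d+1) => ε * X z₀ i with hctr
  set P : Set (EuclideanSpace ℝ (Fin (d+2))) :=
    {x : EuclideanSpace ℝ (Fin (d+2)) | x (Fin.last (d+1)) ∈ Set.Ioo (z₀-η) (z₀+η) ∧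
      (toE fun i : Fin (d+1) => x (Fin.castSucc i)) ∈ Metric.ball ctr (ε*(r₀/2))} with hPdef
  have hPmeas : MeasurableSet P :=
    cyl_measurable d _ _ measurableSet_Ioo measurableSet_ball
  have hPsub : P ⊆ Ω := by
    rintro x ⟨hzx, hbx⟩
    have hzI : x (Fin.last (d+1)) ∈ Set.Ioo (0:ℝ) 1 :=
      ⟨lt_of_lt_of_le hI1 (le_of_lt hzx.1), lt_of_le_of_lt (le_of_lt hzx.2) hI2⟩
    refine ⟨hzI, ?_⟩
    rw [Metric.mem_ball]
    have h1 : dist (toE fun i : Fin (d+1) => x (Fin.castSucc i) / ε) (X z₀) < r₀/2 := by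
      have hsub2 : (toE fun i : Fin (d+1) => x (Fin.castSucc i) / ε) - X z₀
          = ε⁻¹ • ((toE fun i : Fin (d+1) => x (Fin.castSucc i)) - ctr) := by
        ext i
        show x (Fin.castSucc i) / ε - X z₀ i = ε⁻¹ * (x (Fin.castSucc i) - ε * X z₀ i)
        field_simp
      rw [dist_eq_norm, hsub2, norm_smul, Real.norm_eq_abs, abs_inv, abs_of_pos hε0]
      have h6 : ‖(toE fun i : Fin (d+1) => x (Fin.castSucc i)) - ctr‖ < ε*(r₀/2) := by
        rw [← dist_eq_norm]
        exact hbx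
      rw [inv_mul_lt_iff₀ hε0]
      calc ‖(toE fun i : Fin (d+1) => x (Fin.castSucc i)) - ctr‖ < ε*(r₀/2) := h6
        _ = ε * (r₀/2) := rfl
    have h2 : dist (X z₀) (X (x (Fin.last (d+1)))) ≤ (KX:ℝ) * η := by
      calc dist (X z₀) (X (x (Fin.last (d+1)))) ≤ (KX:ℝ) * dist z₀ (x (Fin.last (d+1))) :=
          hKX.dist_le_mul _ _
        _ ≤ (KX:ℝ) * η := by
            apply mul_le_mul_of_nonneg_left _ KX.coe_nonneg
            rw [Real.dist_eq, abs_le]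
            have hx1 := hzx.1; have hx2 := hzx.2
            constructor <;> linarith
    have h3 : r₀ - (Kr:ℝ) * η ≤ r (x (Fin.last (d+1))) := by
      have h7 : dist (r z₀) (r (x (Fin.last (d+1)))) ≤ (Kr:ℝ) * dist z₀ (x (Fin.last (d+1))) :=
        hKr.dist_le_mul _ _
      have h8 : dist z₀ (x (Fin.last (d+1))) ≤ η := by
        rw [Real.dist_eq, abs_le]
        have hx1 := hzx.1; have hx2 := hzx.2
        constructor <;> linarith
      have h9 : |r z₀ - r (x (Fin.last (d+1)))| ≤ (Kr:ℝ) * η := by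
        rw [← Real.dist_eq]
        calc dist (r z₀) (r (x (Fin.last (d+1)))) ≤ (Kr:ℝ) * dist z₀ (x (Fin.last (d+1))) := h7
          _ ≤ (Kr:ℝ) * η := mul_le_mul_of_nonneg_left h8 Kr.coe_nonneg
      have h10 : r z₀ - r (x (Fin.last (d+1))) ≤ (Kr:ℝ) * η :=
        le_trans (le_abs_self _) h9
      rw [hr₀def]; linarith
    calc dist (toE fun i : Fin (d+1) => x (Fin.castSucc i) / ε) (X (x (Fin.last (d+1))))
        ≤ dist (toE fun i : Fin (d+1) => x (Fin.castSucc i) / ε) (X z₀)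
          + dist (X z₀) (X (x (Fin.last (d+1)))) := dist_triangle _ _ _
      _ < r₀/2 + (KX:ℝ)*η := by linarith
      _ ≤ r (x (Fin.last (d+1))) := by
          have := hηK
          nlinarith [Kr.coe_nonneg, hη0]
  have hvolP : volume P = ENNReal.ofReal (2*η) * (ENNReal.ofReal ((ε*(r₀/2))^(d+1)) * Vb) := by
    rw [hPdef, cyl_volume d _ _ measurableSet_Ioo measurableSet_ball, Real.volume_Ioo,
      Measure.addHaar_ball _ _ (by positivity : (0:ℝ) ≤ ε*(r₀/2)), finrank_euclideanSpace_fin]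
    congr 2
    ring
  have hvolP0 : 0 < volume P := by
    rw [hvolP]
    apply ENNReal.mul_pos
    · exact (ENNReal.ofReal_pos.2 (by linarith)).ne'
    · exact (ENNReal.mul_pos (ENNReal.ofReal_pos.2 (by positivity)).ne' hVb0.ne').ne'
  have hvolΩ0 : 0 < volume Ω := lt_of_lt_of_le hvolP0 (measure_mono hPsub)
  have hvolΩfin : volume Ω < ⊤ :=
    lt_of_le_of_lt hvolΩ_le (ENNReal.mul_lt_top ENNReal.ofReal_lt_top hVbfin)
  have hvolPfin : volume P < ⊤ := lt_of_le_of_lt (measure_mono hPsub) hvolΩfin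
  haveI hfinΩ : IsFiniteMeasure (volume.restrict Ω) :=
    ⟨by rwa [Measure.restrict_apply_univ]⟩
  haveI hfinP : IsFiniteMeasure (volume.restrict P) :=
    ⟨by rwa [Measure.restrict_apply_univ]⟩
  -- integrability
  have hbf : ∀ᵐ x ∂(volume.restrict Ω), ‖frob2 (gradM v x)‖ ≤ Bf := by
    filter_upwards [haeΩ, ae_restrict_mem hΩmeas] with x hdx hxΩ
    rw [Real.norm_eq_abs, abs_of_nonneg (hf0 x), hfeq x hdx]
    have hzIcc' : x (Fin.last (d+1)) ∈ Set.Icc (0:ℝ) 1 := ⟨le_of_lt hxΩ.1.1, le_of_lt hxΩ.1.2⟩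
    have h1 : F (x (Fin.last (d+1))) ≤ ((d:ℝ)+1)^2*CQ^2 := by
      rw [hF]
      calc ∑ i, ∑ j, (Q (x (Fin.last (d+1))) i j)^2
          ≤ ∑ _i : Fin (d+1), ∑ _j : Fin (d+1), CQ^2 := by
            apply Finset.sum_le_sum
            intro i _
            apply Finset.sum_le_sum
            intro j _
            have e := hQb _ hzIcc' i j
            exact sq_le_sq' (by linarith [neg_abs_le (Q (x (Fin.last (d+1))) i j)])
              (by linarith [le_abs_self (Q (x (Fin.last (d+1))) i j)])
        _ = ((d:ℝ)+1)^2*CQ^2 := by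
            rw [Finset.sum_const, Finset.sum_const, Finset.card_univ, Fintype.card_fin]
            push_cast
            ring
    have h2 : ∑ i', (vcol d X ε Q x i')^2 ≤ ((d:ℝ)+1)*C₁^2 := by
      calc ∑ i', (vcol d X ε Q x i')^2
          ≤ ∑ _i' : Fin (d+1), C₁^2 := by
            apply Finset.sum_le_sum
            intro i' _
            have e := hcolb x hxΩ i'
            have e2 : |vcol d X ε Q x i'| ≤ C₁ := by nlinarith
            exact sq_le_sq' (by linarith [neg_abs_le (vcol d X ε Q x i')])
              (by linarith [le_abs_self (vcol d X ε Q x i')])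
        _ = ((d:ℝ)+1)*C₁^2 := by
            rw [Finset.sum_const, Finset.card_univ, Fintype.card_fin]
            push_cast
            ring
    rw [hBf]
    linarith
  have hintf : IntegrableOn (fun x => frob2 (gradM v x)) Ω volume :=
    Integrable.mono' (integrable_const Bf) hmf.aestronglyMeasurable hbf
  have hbg : ∀ᵐ x ∂(volume.restrict Ω), frob2 (symPart (gradM v x)) ≤ C₀ * ε^2 := by
    filter_upwards [haeΩ, ae_restrict_mem hΩmeas] with x hdx hxΩ
    rw [hgeq x hdx]
    have h2 : ∑ i', (vcol d X ε Q x i')^2 ≤ ((d:ℝ)+1)*(ε*C₁)^2 := by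
      calc ∑ i', (vcol d X ε Q x i')^2
          ≤ ∑ _i' : Fin (d+1), (ε*C₁)^2 := by
            apply Finset.sum_le_sum
            intro i' _
            have e := hcolb x hxΩ i'
            exact sq_le_sq' (by linarith [neg_abs_le (vcol d X ε Q x i')])
              (by linarith [le_abs_self (vcol d X ε Q x i')])
        _ = ((d:ℝ)+1)*(ε*C₁)^2 := by
            rw [Finset.sum_const, Finset.card_univ, Fintype.card_fin]
            push_cast
            ring
    rw [hC₀]
    nlinarith
  have hbg' : ∀ᵐ x ∂(volume.restrict Ω), ‖frob2 (symPart (gradM v x))‖ ≤ C₀ * ε^2 := by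
    filter_upwards [hbg] with x hx
    rw [Real.norm_eq_abs, abs_of_nonneg (hg0 x)]
    exact hx
  have hintg : IntegrableOn (fun x => frob2 (symPart (gradM v x))) Ω volume :=
    Integrable.mono' (integrable_const (C₀ * ε^2)) hmg.aestronglyMeasurable hbg'
  refine ⟨hlip, hnbc, hends, ?_, ?_⟩
  · -- lower bound
    have haeP : ∀ᵐ x ∂(volume.restrict P), DifferentiableAt ℝ X (x (Fin.last (d+1))) :=
      ae_restrict_of_ae haegen
    have hm₁f : ∀ᵐ x ∂(volume.restrict P), m₁ ≤ frob2 (gradM v x) := by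
      filter_upwards [haeP, ae_restrict_mem hPmeas] with x hdx hxP
      rw [hfeq x hdx]
      have h1 : m₁ ≤ F (x (Fin.last (d+1))) :=
        hFlo _ ⟨le_of_lt hxP.1.1, le_of_lt hxP.1.2⟩
      have h2 : 0 ≤ ∑ i', (vcol d X ε Q x i')^2 :=
        Finset.sum_nonneg fun i' _ => sq_nonneg _
      linarith
    have hPint : m₁ * (volume P).toReal ≤ ∫ x in P, frob2 (gradM v x) ∂volume := by
      have h1 : ∫ _x in P, (m₁ : ℝ) ∂volume ≤ ∫ x in P, frob2 (gradM v x) ∂volume :=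
        integral_mono_ae (integrable_const m₁) (hintf.mono_set hPsub) hm₁f
      rw [setIntegral_const, smul_eq_mul, measureReal_def] at h1
      linarith [h1, mul_comm m₁ (volume P).toReal]
    have hΩint : ∫ x in P, frob2 (gradM v x) ∂volume
        ≤ ∫ x in Ω, frob2 (gradM v x) ∂volume :=
      setIntegral_mono_set hintf (Filter.Eventually.of_forall fun x => hf0 x)
        (HasSubset.Subset.eventuallyLE hPsub)
    rw [setAverage_eq, smul_eq_mul]
    set VΩ : ℝ := (volume Ω).toReal with hVΩ
    set VP : ℝ := (volume P).toReal with hVP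
    have hVΩ0 : 0 < VΩ := ENNReal.toReal_pos hvolΩ0.ne' hvolΩfin.ne
    have hVΩle : VΩ ≤ (ε*R)^(d+1) * Vbr := by
      have h1 := ENNReal.toReal_mono
        (ENNReal.mul_ne_top ENNReal.ofReal_ne_top hVbfin.ne) hvolΩ_le
      rwa [ENNReal.toReal_mul, ENNReal.toReal_ofReal (by positivity)] at h1
    have hVPeq : VP = 2*η * ((ε*(r₀/2))^(d+1) * Vbr) := by
      rw [hVP, hvolP, ENNReal.toReal_mul, ENNReal.toReal_mul,
        ENNReal.toReal_ofReal (by linarith), ENNReal.toReal_ofReal (by positivity)]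
    have hDup0 : 0 < (ε*R)^(d+1) * Vbr := by positivity
    have hinv : ((ε*R)^(d+1) * Vbr)⁻¹ ≤ VΩ⁻¹ := by
      apply inv_anti₀ hVΩ0 hVΩle
    have hceq : cc = ((ε*R)^(d+1) * Vbr)⁻¹ * (m₁ * VP) := by
      rw [hVPeq, hcc]
      exact calc_ceq m₁ η (r₀/2) ε R Vbr (ne_of_gt hε0) (ne_of_gt hR0) (ne_of_gt hVbr0) (d+1)
    have hVP0 : 0 ≤ VP := ENNReal.toReal_nonneg
    calc cc = ((ε*R)^(d+1) * Vbr)⁻¹ * (m₁ * VP) := hceq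
      _ ≤ VΩ⁻¹ * (m₁ * VP) := by
          apply mul_le_mul_of_nonneg_right hinv (by positivity)
      _ ≤ VΩ⁻¹ * ∫ x in Ω, frob2 (gradM v x) ∂volume := by
          apply mul_le_mul_of_nonneg_left _ (by positivity)
          calc m₁ * VP ≤ ∫ x in P, frob2 (gradM v x) ∂volume := hPint
            _ ≤ ∫ x in Ω, frob2 (gradM v x) ∂volume := hΩint
  · -- upper bound
    have h1 : ∫ x in Ω, frob2 (symPart (gradM v x)) ∂volume
        ≤ (volume Ω).toReal * (C₀ * ε^2) := by
      have h2 : ∫ x in Ω, frob2 (symPart (gradM v x)) ∂volume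
          ≤ ∫ _x in Ω, (C₀ * ε^2 : ℝ) ∂volume :=
        integral_mono_ae hintg (integrable_const _) hbg
      rw [setIntegral_const, smul_eq_mul] at h2
      exact h2
    rw [setAverage_eq, smul_eq_mul]
    have hVΩ0 : 0 < (volume Ω).toReal := ENNReal.toReal_pos hvolΩ0.ne' hvolΩfin.ne
    calc (volume Ω).toReal⁻¹ * ∫ x in Ω, frob2 (symPart (gradM v x)) ∂volume
        ≤ (volume Ω).toReal⁻¹ * ((volume Ω).toReal * (C₀ * ε^2)) := by
          apply mul_le_mul_of_nonneg_left h1 (by positivity)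
      _ = C₀ * ε^2 := by
          rw [← mul_assoc, inv_mul_cancel₀ (ne_of_gt hVΩ0), one_mul]
      _ ≤ (C₀ + 1) * ε^2 := by nlinarith [sq_nonneg ε]
end
end
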